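/- arXiv:quant-ph/0309177 — 8 statements merged into one kernel-verified Lean document; each statement's English description precedes it below -/
import Mathlib

section
/- Let n ≥ 2 and let x_1,…,x_n : ℝ → ℝ be functions, each differentiable at 0, whose values x_1(0),…,x_n(0) are pairwise distinct, strictly positive, and sum to 1. Fix q with 2 ≤ q ≤ n and suppose that for all t in a neighbourhood of 0 the elementary symmetric polynomials satisfy e_j(x_1(t),…,x_n(t)) = e_j(x_1(0),…,x_n(0)) for every j ∈ {1,…,n} with j ≠ q, while e_q(x_1(t),…,x_n(t)) = e_q(x_1(0),…,x_n(0)) + t. Then the function t ↦ −∑_{k=1}^n x_k(t)·ln(x_k(t)) has a strictly positive derivative at t = 0. (This is the statement ∂S/∂s_q > 0 for q ≥ 2, where S is the Shannon entropy viewed as a function of the symmetric polynomials s_1,…,s_n.) -/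
open Set Filter Polynomial

/-- The `k`-th elementary symmetric polynomial of `x : Fin n → ℝ`. -/
noncomputable def esymm (n k : ℕ) (x : Fin n → ℝ) : ℝ :=
  ∑ s ∈ Finset.powersetCard k (Finset.univ : Finset (Fin n)), ∏ i ∈ s, x i

lemma eqOn_deriv {U : Set ℝ} (hU : IsOpen U) {f g : ℝ → ℝ} (h : EqOn f g U) :
    EqOn (deriv f) (deriv g) U := fun _ hz =>
  Filter.EventuallyEq.deriv_eq (Filter.eventuallyEq_of_mem (hU.mem_nhds hz) h)

lemma eqOn_deriv_iter {U : Set ℝ} (hU : IsOpen U) {f g : ℝ → ℝ} (h : EqOn f g U) (k : ℕ) :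
    EqOn (deriv^[k] f) (deriv^[k] g) U := by
  induction k with
  | zero => exact h
  | succ k ih =>
    rw [Function.iterate_succ_apply', Function.iterate_succ_apply']
    exact eqOn_deriv hU ih

lemma deriv_iter_log (c b : ℝ) : ∀ k : ℕ,
    Set.EqOn (deriv^[k+1] (fun z => c * Real.log z + b))
      (fun z => c * (-1)^k * (k.factorial : ℝ) * z ^ (-(k+1) : ℤ)) (Ioi 0) := by
  intro k
  induction k with
  | zero =>
    intro z hz
    have hz' : (z:ℝ) ≠ 0 := ne_of_gt hz
    have : HasDerivAt (fun z => c * Real.log z + b) (c * z⁻¹) z :=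
      ((Real.hasDerivAt_log hz').const_mul c).add_const b
    simp [Function.iterate_one, this.deriv, zpow_neg, hz']
  | succ k ih =>
    intro z hz
    have hz' : (z:ℝ) ≠ 0 := ne_of_gt hz
    rw [Function.iterate_succ_apply']
    have h1 := eqOn_deriv isOpen_Ioi ih hz
    rw [h1]
    have : HasDerivAt (fun z : ℝ => c * (-1)^k * (k.factorial : ℝ) * z ^ (-(k+1) : ℤ))
        (c * (-1)^k * (k.factorial : ℝ) * ((-(k+1) : ℤ) * z ^ ((-(k+1) : ℤ) - 1))) z :=
      (hasDerivAt_zpow (-(k+1)) z (Or.inl hz')).const_mul _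
    rw [this.deriv]
    have he : ((-(k+1) : ℤ) - 1) = (-(k+1+1) : ℤ) := by ring
    rw [he]
    push_cast [Nat.factorial_succ]
    ring

lemma deriv_iter_pow_log (m : ℕ) : ∀ k, k ≤ m → ∃ B : ℝ,
    Set.EqOn (deriv^[k] (fun z => z^m * (Real.log z + 1)))
      (fun z => (m.descFactorial k : ℝ) * z^(m-k) * Real.log z + B * z^(m-k)) (Ioi 0) := by
  intro k
  induction k with
  | zero =>
    intro _
    refine ⟨1, fun z hz => by simp; ring⟩
  | succ k ih =>
    intro hk
    obtain ⟨B, hB⟩ := ih (by omega)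
    refine ⟨(m.descFactorial k : ℝ) + B * ((m - k : ℕ) : ℝ), fun z hz => ?_⟩
    have hz' : (z:ℝ) ≠ 0 := ne_of_gt hz
    rw [Function.iterate_succ_apply']
    rw [eqOn_deriv isOpen_Ioi hB hz]
    have hmk : 1 ≤ m - k := by omega
    have hd : HasDerivAt (fun z : ℝ => (m.descFactorial k : ℝ) * z^(m-k) * Real.log z
        + B * z^(m-k))
        (((m.descFactorial k : ℝ) * (((m-k : ℕ):ℝ) * z^(m-k-1)) * Real.log z
          + (m.descFactorial k : ℝ) * z^(m-k) * z⁻¹)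
          + B * (((m-k : ℕ):ℝ) * z^(m-k-1))) z := by
      have h1 : HasDerivAt (fun z : ℝ => z^(m-k)) (((m-k : ℕ):ℝ) * z^(m-k-1)) z :=
        hasDerivAt_pow (m-k) z
      exact (((h1.const_mul ((m.descFactorial k : ℝ))).mul
        (Real.hasDerivAt_log hz')).add (h1.const_mul B))
    rw [hd.deriv]
    have hzp : z^(m-k) * z⁻¹ = z^(m-k-1) := by
      rw [← pow_sub_one_mul (by omega : m - k ≠ 0) z]
      field_simp
    have he1 : m - k - 1 = m - (k+1) := by omega
    have he2 : (m.descFactorial (k+1) : ℝ) = ((m - k : ℕ) : ℝ) * (m.descFactorial k : ℝ) := by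
      rw [Nat.descFactorial_succ]; push_cast; ring
    rw [mul_assoc ((m.descFactorial k : ℝ)) (z^(m-k)) z⁻¹, hzp, he1, he2]
    ring

/-- the final derivative formula -/
lemma deriv_iter_f (m q : ℕ) (hq : 2 ≤ q) :
    Set.EqOn (deriv^[m + q - 1] (fun z => z^m * (Real.log z + 1)))
      (fun z => (m.factorial : ℝ) * (-1)^q * ((q-2).factorial : ℝ) * z ^ (-((q:ℤ)-1)))
      (Ioi 0) := by
  obtain ⟨r, rfl⟩ : ∃ r, q = r + 2 := ⟨q - 2, by omega⟩
  obtain ⟨B, hB⟩ := deriv_iter_pow_log m m le_rfl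
  have h1 : m + (r + 2) - 1 = (r + 1) + m := by omega
  rw [h1]
  intro z hz
  rw [Function.iterate_add_apply]
  have h2 := eqOn_deriv_iter isOpen_Ioi hB (r+1) hz
  rw [h2]
  have hB' : (fun z : ℝ => (m.descFactorial m : ℝ) * z^(m-m) * Real.log z + B * z^(m-m))
      = fun z : ℝ => (m.factorial : ℝ) * Real.log z + B := by
    funext w; simp [Nat.descFactorial_self]
  rw [hB']
  have h3 := deriv_iter_log (m.factorial : ℝ) B r hz
  rw [h3]
  have he : (-((r:ℤ)+1)) = -((r + 2 : ℕ) : ℤ) + 1 := by push_cast; ring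
  have hq2 : (r + 2) - 2 = r := by omega
  rw [hq2]
  have hsgn : ((-1 : ℝ)) ^ r = (-1 : ℝ)^(r + 2) := by rw [pow_add]; norm_num
  rw [he] at *
  have : -((r:ℤ) + 2) + 1 = -(((r+2:ℕ):ℤ)) + 1 := by push_cast; ring
  simp only [hsgn]
  congr 1
  push_cast
  ring

/-- differentiability of all iterated derivatives on (0,∞) -/
lemma diffAt_iter_f (m : ℕ) (k : ℕ) {z : ℝ} (hz : z ∈ Ioi 0) :
    DifferentiableAt ℝ (deriv^[k] (fun z => z^m * (Real.log z + 1))) z := by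
  have hz' : (z:ℝ) ≠ 0 := ne_of_gt (mem_Ioi.mp hz)
  rcases le_or_gt k m with hk | hk
  · obtain ⟨B, hB⟩ := deriv_iter_pow_log m k hk
    have hev : deriv^[k] (fun z => z^m * (Real.log z + 1))
        =ᶠ[nhds z] (fun z => (m.descFactorial k : ℝ) * z^(m-k) * Real.log z + B * z^(m-k)) :=
      Filter.eventuallyEq_of_mem (isOpen_Ioi.mem_nhds hz) hB
    rw [hev.differentiableAt_iff]
    exact (((differentiableAt_pow _).const_mul _).mul
      (Real.differentiableAt_log hz')).add ((differentiableAt_pow _).const_mul _)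
  · obtain ⟨B, hB⟩ := deriv_iter_pow_log m m le_rfl
    obtain ⟨j, rfl⟩ : ∃ j, k = (j + 1) + m := ⟨k - m - 1, by omega⟩
    have hB' : (fun z : ℝ => (m.descFactorial m : ℝ) * z^(m-m) * Real.log z + B * z^(m-m))
        = fun z : ℝ => (m.factorial : ℝ) * Real.log z + B := by
      funext w; simp [Nat.descFactorial_self]
    have hev : deriv^[(j+1)+m] (fun z => z^m * (Real.log z + 1))
        =ᶠ[nhds z] (fun z => (m.factorial : ℝ) * (-1)^j * (j.factorial : ℝ)
          * z ^ (-(j+1) : ℤ)) := by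
      apply Filter.eventuallyEq_of_mem (isOpen_Ioi.mem_nhds hz)
      intro w hw
      rw [Function.iterate_add_apply, eqOn_deriv_iter isOpen_Ioi hB (j+1) hw, hB',
        deriv_iter_log (m.factorial : ℝ) B j hw]
    rw [hev.differentiableAt_iff]
    exact (differentiableAt_zpow.mpr (Or.inl hz')).const_mul _

lemma rolle_round {h : ℝ → ℝ} (hcont : ∀ z : ℝ, 0 < z → ContinuousAt h z)
    {s : Finset ℝ} (hs : ∀ y ∈ s, 0 < y ∧ h y = 0) :
    ∃ t : Finset ℝ, s.card - 1 ≤ t.card ∧ ∀ y ∈ t, 0 < y ∧ deriv h y = 0 := by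
  rcases le_or_gt s.card 1 with h1 | h1
  · exact ⟨∅, by simp; omega, by simp⟩
  · set N := s.card with hN
    set a : Fin N → ℝ := fun i => (s.orderIsoOfFin rfl i : ℝ) with ha
    have hmono : StrictMono a := fun i j hij => by
      simpa [ha] using (s.orderIsoOfFin rfl).strictMono hij
    have hmem : ∀ i, a i ∈ s := fun i => (s.orderIsoOfFin rfl i).2
    have key : ∀ i : Fin (N - 1), ∃ c : ℝ,
        a ⟨i, by omega⟩ < c ∧ c < a ⟨i + 1, by omega⟩ ∧ deriv h c = 0 := by
      intro i
      have hlt : a ⟨i, by omega⟩ < a ⟨i + 1, by omega⟩ := hmono (by simp [Fin.lt_def])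
      have hc : ContinuousOn h (Icc (a ⟨i, by omega⟩) (a ⟨i + 1, by omega⟩)) := by
        intro w hw
        exact (hcont w (lt_of_lt_of_le (hs _ (hmem _)).1 hw.1)).continuousWithinAt
      have heq : h (a ⟨i, by omega⟩) = h (a ⟨i + 1, by omega⟩) := by
        rw [(hs _ (hmem _)).2, (hs _ (hmem _)).2]
      obtain ⟨c, hc1, hc2⟩ := exists_deriv_eq_zero hlt hc heq
      exact ⟨c, hc1.1, hc1.2, hc2⟩
    choose c hc1 hc2 hc3 using key
    have hcmono : StrictMono c := by
      intro i j hij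
      calc c i < a ⟨i + 1, by omega⟩ := hc2 i
        _ ≤ a ⟨j, by omega⟩ := by
            rcases eq_or_lt_of_le (show (i:ℕ) + 1 ≤ (j:ℕ) from hij) with he | hlt
            · exact le_of_eq (by congr 1; exact Fin.ext he)
            · exact le_of_lt (hmono (by simp [Fin.lt_def]; omega))
        _ < c j := hc1 j
    refine ⟨Finset.image c Finset.univ, ?_, ?_⟩
    · rw [Finset.card_image_of_injective _ hcmono.injective]
      simp
    · intro y hy
      obtain ⟨i, _, rfl⟩ := Finset.mem_image.mp hy
      exact ⟨lt_trans (hs _ (hmem ⟨i, by omega⟩)).1 (hc1 i), hc3 i⟩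

lemma iter_rolle : ∀ (k : ℕ) (h : ℝ → ℝ),
    (∀ j (z : ℝ), 0 < z → ContinuousAt (deriv^[j] h) z) →
    ∀ s : Finset ℝ, (∀ y ∈ s, 0 < y ∧ h y = 0) → k < s.card →
    ∃ ξ : ℝ, 0 < ξ ∧ deriv^[k] h ξ = 0 := by
  intro k
  induction k with
  | zero =>
    intro h _ s hs hcard
    obtain ⟨y, hy⟩ := Finset.card_pos.mp hcard
    exact ⟨y, (hs y hy).1, (hs y hy).2⟩
  | succ k ih =>
    intro h hcont s hs hcard
    obtain ⟨t, ht1, ht2⟩ := rolle_round (fun z hz => by simpa using hcont 0 z hz) hs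
    obtain ⟨ξ, hξ1, hξ2⟩ := ih (deriv h)
      (fun j z hz => by
        have := hcont (j + 1) z hz
        rwa [Function.iterate_succ_apply] at this)
      t ht2 (by omega)
    refine ⟨ξ, hξ1, ?_⟩
    rwa [Function.iterate_succ_apply]

lemma deriv_iter_sub_poly {U : Set ℝ} (hU : IsOpen U) (f : ℝ → ℝ)
    (hf : ∀ (k : ℕ) (z : ℝ), z ∈ U → DifferentiableAt ℝ (deriv^[k] f) z) (p : Polynomial ℝ) :
    ∀ k : ℕ, EqOn (deriv^[k] (fun z => f z - p.eval z))
      (fun z => deriv^[k] f z - (Polynomial.derivative^[k] p).eval z) U := by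
  intro k
  induction k with
  | zero => exact fun z _ => rfl
  | succ k ih =>
    intro z hz
    rw [Function.iterate_succ_apply', eqOn_deriv hU ih hz]
    rw [deriv_fun_sub (hf k z hz) (Polynomial.differentiableAt _)]
    rw [Polynomial.deriv, Function.iterate_succ_apply', Function.iterate_succ_apply']

lemma DD_pos (n q : ℕ) (hq2 : 2 ≤ q) (hqn : q ≤ n) (a : Fin n → ℝ)
    (ha : Function.Injective a) (hapos : ∀ i, 0 < a i) :
    0 < (-1 : ℝ)^q * ∑ i, (a i ^ (n - q) * (Real.log (a i) + 1)) *
      (∏ l ∈ Finset.univ.erase i, (a i - a l))⁻¹ := by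
  set m := n - q with hm
  set f : ℝ → ℝ := fun z => z^m * (Real.log z + 1) with hf
  set p : Polynomial ℝ := Lagrange.interpolate Finset.univ a (fun i => f (a i)) with hp
  have hinj : Set.InjOn a ↑(Finset.univ : Finset (Fin n)) := Function.Injective.injOn ha
  set g : ℝ → ℝ := fun z => f z - p.eval z with hg
  have hfd : ∀ (k : ℕ) (z : ℝ), z ∈ Set.Ioi 0 → DifferentiableAt ℝ (deriv^[k] f) z :=
    fun k z hz => diffAt_iter_f m k hz
  have hsub := deriv_iter_sub_poly isOpen_Ioi f hfd p
  have hcont : ∀ j (z : ℝ), 0 < z → ContinuousAt (deriv^[j] g) z := by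
    intro j z hz
    have hev : deriv^[j] g =ᶠ[nhds z]
        (fun z => deriv^[j] f z - (Polynomial.derivative^[j] p).eval z) :=
      Filter.eventuallyEq_of_mem (isOpen_Ioi.mem_nhds hz) (hsub j)
    exact (hev.differentiableAt_iff.mpr
      ((hfd j z hz).sub (Polynomial.differentiableAt _))).continuousAt
  set s : Finset ℝ := Finset.image a Finset.univ with hs
  have hcard : s.card = n := by
    rw [hs, Finset.card_image_of_injective _ ha, Finset.card_univ, Fintype.card_fin]
  have hzero : ∀ y ∈ s, 0 < y ∧ g y = 0 := by
    intro y hy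
    obtain ⟨i, _, rfl⟩ := Finset.mem_image.mp hy
    refine ⟨hapos i, ?_⟩
    have := Lagrange.eval_interpolate_at_node (fun i => f (a i)) hinj (Finset.mem_univ i)
    simp only [hg, hp, this, sub_self]
  obtain ⟨ξ, hξpos, hξ⟩ := iter_rolle (n-1) g hcont s hzero (by omega)
  -- expand the Rolle equation
  rw [hsub (n-1) (Set.mem_Ioi.mpr hξpos)] at hξ
  replace hξ : deriv^[n-1] f ξ - Polynomial.eval ξ ((⇑Polynomial.derivative)^[n-1] p) = 0 := hξ
  have hmq : m + q - 1 = n - 1 := by omega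
  have hfval : deriv^[n-1] f ξ
      = (m.factorial : ℝ) * (-1)^q * ((q-2).factorial : ℝ) * ξ ^ (-((q:ℤ)-1)) := by
    rw [← hmq]; exact deriv_iter_f m q hq2 (Set.mem_Ioi.mpr hξpos)
  -- the iterated derivative of p is constant
  have hpdeg : p.natDegree ≤ n - 1 := by
    by_cases h0 : p = 0
    · simp [h0]
    · have := Lagrange.degree_interpolate_lt (fun i => f (a i)) hinj
      rw [Finset.card_univ, Fintype.card_fin] at this
      have := (Polynomial.natDegree_lt_iff_degree_lt h0).mpr this
      omega
  have hp1deg : (Polynomial.derivative^[n-1] p).natDegree = 0 := by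
    have := Polynomial.natDegree_iterate_derivative p (n-1)
    omega
  have heval : (Polynomial.derivative^[n-1] p).eval ξ
      = ((n-1).factorial : ℝ) * p.coeff (n-1) := by
    rw [Polynomial.eq_C_of_natDegree_eq_zero hp1deg, Polynomial.eval_C,
      Polynomial.coeff_iterate_derivative, zero_add, Nat.descFactorial_self, nsmul_eq_mul]
  -- the leading coefficient of the interpolant is the divided difference
  have hcoeff : p.coeff (n-1)
      = ∑ i, f (a i) * (∏ l ∈ Finset.univ.erase i, (a i - a l))⁻¹ := by
    rw [hp, Lagrange.interpolate_apply, Polynomial.finset_sum_coeff]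
    refine Finset.sum_congr rfl fun i _ => ?_
    rw [Polynomial.coeff_C_mul]
    congr 1
    have hbasis : Lagrange.basis Finset.univ a i
        = Polynomial.C (∏ l ∈ Finset.univ.erase i, (a i - a l)⁻¹)
          * ∏ l ∈ Finset.univ.erase i, (Polynomial.X - Polynomial.C (a l)) := by
      rw [Lagrange.basis]
      simp_rw [Lagrange.basisDivisor]
      rw [Finset.prod_mul_distrib, map_prod]
    rw [hbasis, Polynomial.coeff_C_mul]
    have hmonic : (∏ l ∈ Finset.univ.erase i, (Polynomial.X - Polynomial.C (a l))).Monic :=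
      Polynomial.monic_prod_of_monic _ _ fun l _ => Polynomial.monic_X_sub_C _
    have hdeg : (∏ l ∈ Finset.univ.erase i, (Polynomial.X - Polynomial.C (a l))).natDegree
        = n - 1 := by
      rw [Polynomial.natDegree_prod_of_monic _ _ fun l _ => Polynomial.monic_X_sub_C _]
      simp [Finset.card_erase_of_mem]
    rw [← hdeg, hmonic.coeff_natDegree, mul_one, Finset.prod_inv_distrib]
  rw [hfval, heval, hcoeff, sub_eq_zero] at hξ
  -- conclude positivity
  have hkey : ((n-1).factorial : ℝ) * ((-1 : ℝ)^q * ∑ i, (a i ^ m * (Real.log (a i) + 1)) *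
      (∏ l ∈ Finset.univ.erase i, (a i - a l))⁻¹)
      = (m.factorial : ℝ) * ((q-2).factorial : ℝ) * ξ ^ (-((q:ℤ)-1)) := by
    have h1 : ((-1:ℝ)^q) * ((-1:ℝ)^q) = 1 := by
      rw [← pow_add]
      exact Even.neg_one_pow ⟨q, by ring⟩
    calc ((n-1).factorial : ℝ) * ((-1 : ℝ)^q * ∑ i, (a i ^ m * (Real.log (a i) + 1)) *
          (∏ l ∈ Finset.univ.erase i, (a i - a l))⁻¹)
        = (-1:ℝ)^q * (((n-1).factorial : ℝ) * ∑ i, f (a i) *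
          (∏ l ∈ Finset.univ.erase i, (a i - a l))⁻¹) := by rw [hf]; ring
      _ = (-1:ℝ)^q * ((m.factorial : ℝ) * (-1)^q * ((q-2).factorial : ℝ)
          * ξ ^ (-((q:ℤ)-1))) := by rw [← hξ]
      _ = (((-1:ℝ)^q) * ((-1:ℝ)^q)) * ((m.factorial : ℝ) * ((q-2).factorial : ℝ)
          * ξ ^ (-((q:ℤ)-1))) := by ring
      _ = (m.factorial : ℝ) * ((q-2).factorial : ℝ) * ξ ^ (-((q:ℤ)-1)) := by
          rw [h1, one_mul]
  have hrhs : 0 < (m.factorial : ℝ) * ((q-2).factorial : ℝ) * ξ ^ (-((q:ℤ)-1)) := by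
    apply mul_pos
    · exact mul_pos (Nat.cast_pos.mpr (Nat.factorial_pos _))
        (Nat.cast_pos.mpr (Nat.factorial_pos _))
    · exact zpow_pos hξpos _
  rw [← hkey] at hrhs
  have hfacpos : (0:ℝ) < ((n-1).factorial : ℝ) := Nat.cast_pos.mpr (Nat.factorial_pos _)
  nlinarith [hrhs, hfacpos]

/-- ∂S/∂s_q > 0 for 2 ≤ q ≤ n, where the Shannon entropy S is viewed as a function of
the elementary symmetric polynomials s_1, …, s_n. -/
theorem stmt_0 (n : ℕ) (hn : 2 ≤ n) (x : Fin n → ℝ → ℝ)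
    (hdiff : ∀ k, DifferentiableAt ℝ (x k) 0)
    (hdist : ∀ k l, k ≠ l → x k 0 ≠ x l 0)
    (hpos : ∀ k, 0 < x k 0)
    (hsum : ∑ k, x k 0 = 1)
    (q : ℕ) (hq2 : 2 ≤ q) (hqn : q ≤ n)
    (hfix : ∀ᶠ t in nhds (0 : ℝ), ∀ j, 1 ≤ j → j ≤ n → j ≠ q →
      esymm n j (fun k => x k t) = esymm n j (fun k => x k 0))
    (hvar : ∀ᶠ t in nhds (0 : ℝ),
      esymm n q (fun k => x k t) = esymm n q (fun k => x k 0) + t) :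
    0 < deriv (fun t => -∑ k, x k t * Real.log (x k t)) 0 := by
  classical
  set a : Fin n → ℝ := fun k => x k 0 with haa
  set v : Fin n → ℝ := fun k => deriv (x k) 0 with hvv
  have hainj : Function.Injective a := by
    intro k l h
    by_contra hne
    exact hdist k l hne h
  -- coefficients of ∏ (X - C (y k))
  have coeff_prod : ∀ (y : Fin n → ℝ) (i : ℕ), i ≤ n →
      (∏ k, (Polynomial.X - Polynomial.C (y k))).coeff i = (-1)^(n-i) * esymm n (n-i) y := by
    intro y i hi
    have h1 : (∏ k, (Polynomial.X - Polynomial.C (y k)))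
        = ((Finset.univ.val.map y).map (fun t => Polynomial.X - Polynomial.C t)).prod := by
      rw [Finset.prod_eq_multiset_prod, Multiset.map_map]
      rfl
    have hcard : Multiset.card (Finset.univ.val.map y) = n := by simp
    rw [h1, Multiset.prod_X_sub_C_coeff _ (by rw [hcard]; exact hi), hcard,
      Finset.esymm_map_val]
    rfl
  have hdeg : ∀ y : Fin n → ℝ, (∏ k, (Polynomial.X - Polynomial.C (y k))).natDegree = n := by
    intro y
    rw [Polynomial.natDegree_prod_of_monic _ _ fun k _ => Polynomial.monic_X_sub_C _]
    simp
  -- Step A: eventual polynomial identity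
  have hpoly : ∀ᶠ t in nhds (0:ℝ), (∏ k, (Polynomial.X - Polynomial.C (x k t)))
      = (∏ k, (Polynomial.X - Polynomial.C (a k)))
        + Polynomial.C ((-1)^q * t) * Polynomial.X ^ (n - q) := by
    filter_upwards [hfix, hvar] with t hfixt hvart
    ext i
    rw [Polynomial.coeff_add, Polynomial.coeff_C_mul, Polynomial.coeff_X_pow]
    rcases le_or_gt i n with hi | hi
    · rw [coeff_prod _ i hi, coeff_prod _ i hi]
      rcases eq_or_ne i (n - q) with rfl | hne
      · have hq' : n - (n - q) = q := by omega
        rw [hq', hvart, if_pos rfl]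
        ring
      · rw [if_neg (fun hcon => hne hcon)]
        rcases eq_or_ne (n - i) 0 with h0 | h0
        · rw [h0]
          simp [esymm]
        · rw [hfixt (n-i) (by omega) (by omega) (by omega)]
          ring
    · rw [Polynomial.coeff_eq_zero_of_natDegree_lt (by rw [hdeg]; exact hi),
        Polynomial.coeff_eq_zero_of_natDegree_lt (by rw [hdeg]; exact hi),
        if_neg (by omega)]
      ring
  -- Step B: solve for the derivatives v
  have hveq : ∀ m : Fin n, v m * (∏ l ∈ Finset.univ.erase m, (a m - a l))
      = -((-1)^q * a m ^ (n - q)) := by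
    intro m
    have hFev : (fun t => ∏ k, (x m t - a k))
        =ᶠ[nhds (0:ℝ)] (fun t => -((-1:ℝ)^q * t * (x m t)^(n-q))) := by
      filter_upwards [hpoly] with t ht
      have h0 := congrArg (Polynomial.eval (x m t)) ht
      simp only [Polynomial.eval_prod, Polynomial.eval_add, Polynomial.eval_mul,
        Polynomial.eval_pow, Polynomial.eval_sub, Polynomial.eval_X, Polynomial.eval_C] at h0
      have h1 : ∏ k, (x m t - x k t) = 0 :=
        Finset.prod_eq_zero (Finset.mem_univ m) (by simp)
      rw [h1] at h0
      linarith [h0]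
    have hF : HasDerivAt (fun t => ∏ k, (x m t - a k))
        (∑ k, (∏ j ∈ Finset.univ.erase k, (a m - a j)) • v m) 0 := by
      apply HasDerivAt.fun_finsetProd
      intro k _
      exact (hdiff m).hasDerivAt.sub_const (a k)
    have hG : HasDerivAt (fun t => -((-1:ℝ)^q * t * (x m t)^(n-q)))
        (-((-1:ℝ)^q * a m ^ (n-q))) 0 := by
      have h1 : HasDerivAt (fun t : ℝ => (-1:ℝ)^q * t) ((-1:ℝ)^q) 0 := by
        simpa using (hasDerivAt_id (0:ℝ)).const_mul ((-1:ℝ)^q)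
      have h2 : HasDerivAt (fun t => (x m t)^(n-q))
          ((((n-q : ℕ)) : ℝ) * (x m 0)^(n-q-1) * v m) 0 := (hdiff m).hasDerivAt.pow _
      have h3 := (h1.mul h2).neg
      refine h3.congr_deriv ?_
      simp [haa]
    have hde := hFev.deriv_eq
    rw [hF.deriv, hG.deriv] at hde
    have hsum' : (∑ k, (∏ j ∈ Finset.univ.erase k, (a m - a j)) • v m)
        = v m * (∏ l ∈ Finset.univ.erase m, (a m - a l)) := by
      rw [Finset.sum_eq_single m]
      · rw [smul_eq_mul, mul_comm]
      · intro k _ hk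
        rw [smul_eq_mul]
        apply mul_eq_zero_of_left
        apply Finset.prod_eq_zero (Finset.mem_erase.mpr ⟨Ne.symm hk, Finset.mem_univ m⟩)
        simp
      · intro h
        exact absurd (Finset.mem_univ m) h
    rw [hsum'] at hde
    exact hde
  -- Step C: entropy derivative
  have hS : HasDerivAt (fun t => -∑ k, x k t * Real.log (x k t))
      (-∑ k, (v k * Real.log (a k) + v k)) 0 := by
    apply HasDerivAt.neg
    apply HasDerivAt.fun_sum
    intro k _
    have hxk : HasDerivAt (x k) (v k) 0 := (hdiff k).hasDerivAt
    have hlog : HasDerivAt (fun t => Real.log (x k t)) ((a k)⁻¹ * v k) 0 :=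
      (Real.hasDerivAt_log (ne_of_gt (hpos k))).comp 0 hxk
    have hmul := hxk.mul hlog
    refine hmul.congr_deriv ?_
    have hak : a k ≠ 0 := ne_of_gt (hpos k)
    field_simp [haa]
    show v k * (Real.log (a k) * a k + a k) = v k * a k * (Real.log (a k) + 1)
    ring
  rw [hS.deriv]
  -- Step D: substitute and conclude
  have hDne : ∀ m : Fin n, (∏ l ∈ Finset.univ.erase m, (a m - a l)) ≠ 0 := by
    intro m
    apply Finset.prod_ne_zero_iff.mpr
    intro l hl
    exact sub_ne_zero.mpr (hainj.ne (Finset.mem_erase.mp hl).1.symm)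
  have hterm : ∀ k : Fin n, -(v k * Real.log (a k) + v k)
      = (-1:ℝ)^q * ((a k ^ (n-q) * (Real.log (a k) + 1)) *
        (∏ l ∈ Finset.univ.erase k, (a k - a l))⁻¹) := by
    intro k
    have h1 := hveq k
    have h2 : v k = -((-1:ℝ)^q * a k ^ (n - q)) * (∏ l ∈ Finset.univ.erase k, (a k - a l))⁻¹ := by
      exact (eq_mul_inv_iff_mul_eq₀ (hDne k)).mpr h1
    rw [h2]
    ring
  have hfinal : -∑ k, (v k * Real.log (a k) + v k)
      = (-1:ℝ)^q * ∑ i, (a i ^ (n-q) * (Real.log (a i) + 1)) *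
        (∏ l ∈ Finset.univ.erase i, (a i - a l))⁻¹ := by
    rw [← Finset.sum_neg_distrib, Finset.mul_sum]
    exact Finset.sum_congr rfl fun k _ => hterm k
  rw [hfinal]
  exact DD_pos n q hq2 hqn a hainj hpos
end

section
/- Let n ≥ 2 and let x_1,…,x_n be pairwise distinct strictly positive reals with ∑_k x_k = 1. Then for every q with 2 ≤ q ≤ n, (−1)^q · ∑_{k=1}^n (x_k^{n−q} · ln x_k) / P_k > 0, where P_k = ∏_{i≠k}(x_k − x_i). -/
open Finset Polynomial Filter

/-- For pairwise distinct positive reals summing to 1, the quantity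
`(−1)^q ∑_k x_k^{n−q} ln x_k / ∏_{i≠k}(x_k − x_i)` (which equals ∂S/∂s_q) is positive. -/
theorem stmt_1 (n : ℕ) (hn : 2 ≤ n) (x : Fin n → ℝ)
    (hpos : ∀ k, 0 < x k) (hdist : Function.Injective x)
    (hsum : ∑ k, x k = 1)
    (q : ℕ) (hq2 : 2 ≤ q) (hqn : q ≤ n) :
    0 < (-1 : ℝ) ^ q * ∑ k, (x k ^ (n - q) * Real.log (x k)) /
        ∏ i ∈ Finset.univ.erase k, (x k - x i) := by
  classical
  set m := n - q with hm
  have hmn1 : m < n - 1 := by omega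
  have hmn : m < n := by omega
  have hinj : Set.InjOn x ↑(Finset.univ : Finset (Fin n)) := fun a _ b _ h => hdist h
  let P : Fin n → ℝ := fun k => ∏ i ∈ Finset.univ.erase k, (x k - x i)
  have hPk : ∀ k, (∏ i ∈ Finset.univ.erase k, (x k - x i)) = P k := fun k => rfl
  have hPw : ∀ k, Lagrange.nodalWeight Finset.univ x k = (P k)⁻¹ := by
    intro k
    rw [Lagrange.nodalWeight, ← Finset.prod_inv_distrib]
  have hdeg : (X ^ m : ℝ[X]).degree < (#(Finset.univ : Finset (Fin n)) : ℕ) := by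
    rw [Polynomial.degree_X_pow, Finset.card_univ, Fintype.card_fin]
    exact_mod_cast hmn
  have hinterp := Lagrange.eq_interpolate (v := x) hinj hdeg
  simp only [Polynomial.eval_pow, Polynomial.eval_X] at hinterp
  set a : Fin n → ℝ := fun k => (-1 : ℝ) ^ (q + 1) * (x k ^ m / P k) with haa
  -- the sum of residues vanishes
  have hres0 : ∑ k, x k ^ m / P k = 0 := by
    have hco := congrArg (fun p : ℝ[X] => p.coeff (n - 1)) hinterp
    simp only [Lagrange.interpolate_apply] at hco
    rw [Polynomial.coeff_X_pow, if_neg (by omega), Polynomial.finset_sum_coeff] at hco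
    have hbc : ∀ k : Fin n, (C (x k ^ m) * Lagrange.basis Finset.univ x k).coeff (n - 1)
        = x k ^ m / P k := by
      intro k
      rw [Polynomial.coeff_C_mul,
        Lagrange.basis_eq_prod_sub_inv_mul_nodal_div (Finset.mem_univ k),
        ← Lagrange.nodal_erase_eq_nodal_div (Finset.mem_univ k),
        Polynomial.coeff_C_mul, hPw]
      have hdeg' : (Lagrange.nodal (Finset.univ.erase k) x).natDegree = n - 1 := by
        rw [Lagrange.natDegree_nodal, Finset.card_erase_of_mem (Finset.mem_univ k),
          Finset.card_univ, Fintype.card_fin]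
      rw [← hdeg', (Lagrange.nodal_monic).coeff_natDegree, mul_one, div_eq_mul_inv]
    rw [Finset.sum_congr rfl (fun k _ => hbc k)] at hco
    exact hco.symm
  -- partial fraction identity
  have hpf : ∀ t : ℝ, (∀ i, t ≠ x i) →
      ∑ k, (x k ^ m / P k) / (t - x k) = t ^ m / ∏ i, (t - x i) := by
    intro t ht
    have hev := congrArg (Polynomial.eval t) hinterp
    rw [Lagrange.eval_interpolate_not_at_node _ (fun i _ => ht i)] at hev
    simp only [Polynomial.eval_pow, Polynomial.eval_X, Lagrange.eval_nodal] at hev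
    have hN : (∏ i, (t - x i)) ≠ 0 :=
      Finset.prod_ne_zero_iff.2 fun i _ => sub_ne_zero_of_ne (ht i)
    rw [hev, mul_div_cancel_left₀ _ hN]
    refine Finset.sum_congr rfl fun k _ => ?_
    rw [hPw, div_div, div_eq_mul_inv, mul_inv]
    ring
  -- the derivative value
  have hNpos : ∀ A : ℝ, 0 ≤ A → (0 : ℝ) < ∏ i, (A + x i) :=
    fun A hA => Finset.prod_pos fun i _ => by linarith [hpos i]
  have hsgn : (-1 : ℝ) ^ (q + 1) * (-1) ^ m * (-1) ^ n = -1 := by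
    rw [← pow_add, ← pow_add, show q + 1 + m + n = 2 * n + 1 by omega, pow_succ, pow_mul]
    norm_num
  have hderivval : ∀ A : ℝ, 0 < A → ∑ k, a k / (A + x k) = A ^ m / ∏ i, (A + x i) := by
    intro A hA
    have ht : ∀ i, -A ≠ x i := fun i => by have := hpos i; intro h; linarith [h ▸ this]
    have h1 := hpf (-A) ht
    have h2 : ∑ k, a k / (A + x k)
        = (-1 : ℝ) ^ (q + 1) * -(∑ k, (x k ^ m / P k) / (-A - x k)) := by
      rw [← Finset.sum_neg_distrib, Finset.mul_sum]
      refine Finset.sum_congr rfl fun k _ => ?_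
      rw [show -A - x k = -(A + x k) by ring, div_neg, haa]
      ring
    rw [h2, h1]
    have h3 : ∏ i, (-A - x i) = (-1 : ℝ) ^ n * ∏ i, (A + x i) := by
      calc ∏ i, (-A - x i) = ∏ i : Fin n, (-1) * (A + x i) :=
            Finset.prod_congr rfl fun i _ => by ring
        _ = (-1 : ℝ) ^ n * ∏ i, (A + x i) := by
            rw [Finset.prod_mul_distrib, Finset.prod_const, Finset.card_univ, Fintype.card_fin]
    rw [h3, neg_pow A]
    have e1 : ((-1 : ℝ) ^ n)⁻¹ = (-1 : ℝ) ^ n := by rw [← inv_pow]; norm_num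
    have e2 : (-1 : ℝ) ^ m * A ^ m / ((-1 : ℝ) ^ n * ∏ i, (A + x i))
        = ((-1 : ℝ) ^ m * (-1 : ℝ) ^ n) * (A ^ m / ∏ i, (A + x i)) := by
      rw [div_eq_mul_inv, mul_inv, e1, div_eq_mul_inv]; ring
    rw [e2]
    linear_combination (-(A ^ m / ∏ i, (A + x i))) * hsgn
  -- the auxiliary function
  set h : ℝ → ℝ := fun A => ∑ k, a k * Real.log (A + x k) with hh
  have hderiv : ∀ A : ℝ, 0 ≤ A → HasDerivAt h (∑ k, a k / (A + x k)) A := by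
    intro A hA
    apply HasDerivAt.fun_sum
    intro k _
    have hAx : 0 < A + x k := by linarith [hpos k]
    have h1 : HasDerivAt (fun B : ℝ => B + x k) 1 A := (hasDerivAt_id A).add_const _
    have h2 := (Real.hasDerivAt_log (ne_of_gt hAx)).comp A h1
    simpa [div_eq_mul_inv, mul_comm] using h2.const_mul (a k)
  have hcont : ContinuousOn h (Set.Ici (0 : ℝ)) :=
    fun A hA => ((hderiv A hA).continuousAt.continuousWithinAt)
  have hmono : StrictMonoOn h (Set.Ici (0 : ℝ)) := by
    apply strictMonoOn_of_deriv_pos (convex_Ici 0) hcont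
    intro A hA
    rw [interior_Ici] at hA
    rw [(hderiv A hA.le).deriv, hderivval A hA]
    exact div_pos (pow_pos hA m) (hNpos A hA.le)
  -- total coefficient vanishes
  have hsa : ∑ k, a k = 0 := by
    rw [haa, ← Finset.mul_sum, hres0, mul_zero]
  -- limit at infinity is zero
  have htend : Tendsto h atTop (nhds 0) := by
    have h1 : ∀ k : Fin n,
        Tendsto (fun A : ℝ => a k * (Real.log (A + x k) - Real.log A)) atTop (nhds 0) := by
      intro k
      have h2 : Tendsto (fun A : ℝ => (A + x k) / A) atTop (nhds 1) := by
        have h3 : Tendsto (fun A : ℝ => 1 + x k / A) atTop (nhds 1) := by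
          simpa using
            (tendsto_const_nhds (x := (1:ℝ))).add
              (Tendsto.div_atTop (tendsto_const_nhds (x := x k)) tendsto_id)
        apply h3.congr'
        filter_upwards [eventually_gt_atTop (0 : ℝ)] with A hA
        field_simp
      have h4 : Tendsto (fun A : ℝ => Real.log ((A + x k) / A)) atTop (nhds 0) := by
        have h5 := (Real.continuousAt_log one_ne_zero).tendsto.comp h2
        rw [Real.log_one] at h5; exact h5
      have h6 : Tendsto (fun A : ℝ => Real.log (A + x k) - Real.log A) atTop (nhds 0) := by
        apply h4.congr'
        filter_upwards [eventually_gt_atTop (0 : ℝ)] with A hA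
        rw [Real.log_div (ne_of_gt (by linarith [hpos k])) (ne_of_gt hA)]
      simpa using h6.const_mul (a k)
    have h7 := tendsto_finset_sum Finset.univ fun k (_ : k ∈ Finset.univ) => h1 k
    rw [Finset.sum_const_zero] at h7
    apply h7.congr'
    filter_upwards [eventually_gt_atTop (0 : ℝ)] with A hA
    rw [hh]
    simp only [mul_sub, Finset.sum_sub_distrib, ← Finset.sum_mul, hsa, zero_mul, sub_zero]
  -- conclude
  have h10 : h 1 ≤ 0 := by
    apply ge_of_tendsto htend
    filter_upwards [eventually_ge_atTop (1 : ℝ)] with A hA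
    exact hmono.monotoneOn (by norm_num) (by simp; linarith) hA
  have h01 : h 0 < h 1 := hmono Set.self_mem_Ici (by norm_num) one_pos
  have hneg : h 0 < 0 := lt_of_lt_of_le h01 h10
  have hfin : (-1 : ℝ) ^ q * (∑ k, (x k ^ m * Real.log (x k)) /
      ∏ i ∈ Finset.univ.erase k, (x k - x i)) = -h 0 := by
    rw [hh, Finset.mul_sum, ← Finset.sum_neg_distrib]
    refine Finset.sum_congr rfl fun k _ => ?_
    rw [hPk, haa]
    simp only [zero_add, pow_succ]
    ring
  rw [hfin]
  linarith
end

section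
/- Let n ≥ 2 and let x_1,…,x_n be pairwise distinct reals (or complex numbers). Then ∑_{k=1}^n x_k^n / P_k = x_1 + x_2 + … + x_n, where P_k = ∏_{i≠k}(x_k − x_i). -/
open Polynomial Finset

/-- For pairwise distinct reals `x_1, …, x_n`,
`∑_k x_k^n / ∏_{i≠k}(x_k − x_i) = x_1 + … + x_n`. -/
theorem stmt_4 (n : ℕ) (hn : 2 ≤ n) (x : Fin n → ℝ)
    (hdist : Function.Injective x) :
    ∑ k, x k ^ n / ∏ i ∈ Finset.univ.erase k, (x k - x i) = ∑ k, x k := by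
  classical
  have hn0 : 0 < n := by omega
  have hinj : Set.InjOn x (Finset.univ : Finset (Fin n)) := hdist.injOn
  set q : ℝ[X] := ∏ i : Fin n, (X - C (x i)) with hq
  have hqmonic : q.Monic := monic_prod_of_monic _ _ fun i _ => monic_X_sub_C _
  have hqdeg : q.natDegree = n := by
    rw [hq, natDegree_prod_of_monic _ _ fun i _ => monic_X_sub_C (x i)]
    simp
  have hdegq : q.degree = (n : WithBot ℕ) := by
    rw [degree_eq_natDegree hqmonic.ne_zero, hqdeg]
  set p : ℝ[X] := X ^ n - q with hp
  have hcard : (Finset.univ : Finset (Fin n)).card = n := by simp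
  have hpdeg : p.degree < (n : WithBot ℕ) := by
    have := degree_sub_lt (p := (X : ℝ[X]) ^ n) (q := q)
      (by rw [degree_X_pow, hdegq]) (pow_ne_zero _ X_ne_zero)
      (by rw [leadingCoeff_X_pow, hqmonic.leadingCoeff])
    rwa [degree_X_pow] at this
  have heval : ∀ k : Fin n, p.eval (x k) = x k ^ n := by
    intro k
    have hq0 : q.eval (x k) = 0 := by
      rw [hq, eval_prod]
      exact Finset.prod_eq_zero (Finset.mem_univ k) (by simp)
    simp [hp, hq0]
  have hinterp : p = Lagrange.interpolate Finset.univ x (fun k => x k ^ n) :=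
    Lagrange.eq_interpolate_of_eval_eq _ hinj (by rw [hcard]; exact hpdeg)
      (fun i _ => heval i)
  have hcoeff := congrArg (fun r : ℝ[X] => r.coeff (n - 1)) hinterp
  -- LHS coefficient
  have hL : p.coeff (n - 1) = -q.coeff (n - 1) := by
    rw [hp, coeff_sub, coeff_X_pow, if_neg (by omega), zero_sub]
  have hnext : q.coeff (n - 1) = q.nextCoeff := by
    rw [nextCoeff, if_neg (by omega), hqdeg]
  have hqnext : q.nextCoeff = -∑ i, x i := by
    rw [hq]; exact prod_X_sub_C_nextCoeff x
  -- RHS coefficient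
  have hbasis : ∀ k : Fin n, (Lagrange.basis Finset.univ x k).coeff (n - 1)
      = (∏ i ∈ Finset.univ.erase k, (x k - x i))⁻¹ := by
    intro k
    have hnd : (Lagrange.basis Finset.univ x k).natDegree = n - 1 := by
      rw [Lagrange.natDegree_basis hinj (Finset.mem_univ k), hcard]
    have : (Lagrange.basis Finset.univ x k).coeff (n - 1)
        = (Lagrange.basis Finset.univ x k).leadingCoeff := by
      rw [leadingCoeff, hnd]
    rw [this, Lagrange.basis, leadingCoeff_prod, ← Finset.prod_inv_distrib]
    refine Finset.prod_congr rfl fun j hj => ?_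
    have hne : x k - x j ≠ 0 := sub_ne_zero_of_ne
      (fun h => (Finset.mem_erase.mp hj).1 (hdist h.symm))
    rw [Lagrange.basisDivisor, leadingCoeff_mul, leadingCoeff_C,
      (monic_X_sub_C (x j)).leadingCoeff, mul_one]
  have hR : (Lagrange.interpolate Finset.univ x (fun k => x k ^ n)).coeff (n - 1)
      = ∑ k, x k ^ n / ∏ i ∈ Finset.univ.erase k, (x k - x i) := by
    rw [Lagrange.interpolate_apply, finset_sum_coeff]
    refine Finset.sum_congr rfl fun k _ => ?_
    rw [coeff_C_mul, hbasis k, div_eq_mul_inv]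
  rw [hL, hnext, hqnext, neg_neg, hR] at hcoeff
  exact hcoeff.symm
end

section
/- Let n ≥ 2 and let x_1,…,x_n be pairwise distinct strictly positive reals. For 2 ≤ q ≤ n define W_q(a) = (−1)^q · ∑_{k=1}^n ((x_k + a)^{n−q} · ln(x_k + a)) / P_k for a ≥ 0, where P_k = ∏_{i≠k}(x_k − x_i). Then for every q with 2 ≤ q ≤ n−1 and every a ≥ 0, the function W_q is differentiable at a with derivative W_q′(a) = −(n−q)·W_{q+1}(a). -/
open Polynomial Finset

lemma leadingCoeff_basis {n : ℕ} {x : Fin n → ℝ} (hinj : Function.Injective x) (k : Fin n) :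
    (Lagrange.basis Finset.univ x k).leadingCoeff
      = (∏ i ∈ Finset.univ.erase k, (x k - x i))⁻¹ := by
  rw [Lagrange.basis, leadingCoeff_prod, ← Finset.prod_inv_distrib]
  refine Finset.prod_congr rfl fun j hj => ?_
  have hne : x k ≠ x j := fun h => (Finset.mem_erase.1 hj).1 (hinj h).symm
  rw [Lagrange.basisDivisor, leadingCoeff_mul, leadingCoeff_C,
    (monic_X_sub_C (x j)).leadingCoeff, mul_one]

lemma key_sum {n : ℕ} {x : Fin n → ℝ} (hinj : Function.Injective x) {m : ℕ}
    (hm : m + 1 < n) :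
    ∑ k, x k ^ m / ∏ i ∈ Finset.univ.erase k, (x k - x i) = 0 := by
  have hvs : Set.InjOn x (Finset.univ : Finset (Fin n)) := hinj.injOn
  have hcard : (Finset.univ : Finset (Fin n)).card = n := Finset.card_univ.trans (Fintype.card_fin n)
  have hdeg : (X ^ m : ℝ[X]).degree < (Finset.univ : Finset (Fin n)).card := by
    rw [degree_X_pow, hcard]
    exact_mod_cast lt_of_lt_of_le (Nat.lt_succ_self m) hm.le
  have h := Lagrange.eq_interpolate (f := (X ^ m : ℝ[X])) hvs hdeg
  have h2 := congrArg (fun p : ℝ[X] => p.coeff (n - 1)) h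
  simp only [Lagrange.interpolate_apply, finset_sum_coeff, coeff_C_mul, eval_pow, eval_X] at h2
  rw [coeff_X_pow, if_neg (by omega : ¬ n - 1 = m)] at h2
  have hco : ∀ k : Fin n, (Lagrange.basis Finset.univ x k).coeff (n - 1)
      = (∏ i ∈ Finset.univ.erase k, (x k - x i))⁻¹ := by
    intro k
    have hnd : (Lagrange.basis Finset.univ x k).natDegree = n - 1 := by
      rw [Lagrange.natDegree_basis hvs (Finset.mem_univ k), hcard]
    rw [← hnd, coeff_natDegree, leadingCoeff_basis hinj]
  simp only [hco] at h2
  simp_rw [div_eq_mul_inv]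
  exact h2.symm

/-- The recursion `W_q′(a) = −(n−q)·W_{q+1}(a)` for
`W_q(a) = (−1)^q ∑_k (x_k+a)^{n−q} ln(x_k+a) / ∏_{i≠k}(x_k − x_i)`. -/
theorem stmt_10 (n : ℕ) (hn : 2 ≤ n) (x : Fin n → ℝ)
    (hpos : ∀ k, 0 < x k) (hdist : Function.Injective x)
    (W : ℕ → ℝ → ℝ)
    (hW : ∀ q a, W q a = (-1 : ℝ) ^ q * ∑ k, ((x k + a) ^ (n - q) * Real.log (x k + a)) /
        ∏ i ∈ Finset.univ.erase k, (x k - x i))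
    (q : ℕ) (hq2 : 2 ≤ q) (hqn : q ≤ n - 1) (a : ℝ) (ha : 0 ≤ a) :
    HasDerivAt (W q) (-((n : ℝ) - q) * W (q + 1) a) a := by
  set m := n - q with hmdef
  have hm1 : 1 ≤ m := by omega
  have hmn : m < n := by omega
  have hterm : ∀ k : Fin n,
      HasDerivAt (fun b => ((x k + b) ^ m * Real.log (x k + b)) /
          ∏ i ∈ Finset.univ.erase k, (x k - x i))
        (((m : ℝ) * ((x k + a) ^ (m - 1) * Real.log (x k + a)) + (x k + a) ^ (m - 1)) /
          ∏ i ∈ Finset.univ.erase k, (x k - x i)) a := by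
    intro k
    have hpa : 0 < x k + a := by have := hpos k; linarith
    have hadd : HasDerivAt (fun b => x k + b) 1 a := (hasDerivAt_id a).const_add (x k)
    have h1 : HasDerivAt (fun b => (x k + b) ^ m) ((m : ℝ) * (x k + a) ^ (m - 1) * 1) a :=
      hadd.pow m
    have h2 : HasDerivAt (fun b => Real.log (x k + b)) ((x k + a)⁻¹ * 1) a :=
      (Real.hasDerivAt_log hpa.ne').comp a hadd
    have h3 := (h1.mul h2).div_const (∏ i ∈ Finset.univ.erase k, (x k - x i))
    convert h3 using 2
    · rfl
    · rfl
    · rfl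
    have hpow : (x k + a) ^ m = (x k + a) ^ (m - 1) * (x k + a) := by
      rw [← pow_succ]; congr 1; omega
    rw [hpow, mul_one, mul_one, mul_assoc, mul_assoc, mul_inv_cancel₀ hpa.ne', mul_one]
  have hsum := (HasDerivAt.fun_sum (fun k (_ : k ∈ Finset.univ) => hterm k)).const_mul
    ((-1 : ℝ) ^ q)
  have hWfun : W q = fun b => (-1 : ℝ) ^ q * ∑ k, ((x k + b) ^ m * Real.log (x k + b)) /
      ∏ i ∈ Finset.univ.erase k, (x k - x i) := funext fun b => hW q b
  rw [hWfun]
  have hzero : ∑ k, (x k + a) ^ (m - 1) / ∏ i ∈ Finset.univ.erase k, (x k - x i) = 0 := by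
    have hinj' : Function.Injective (fun k => x k + a) := fun i j h => hdist (by
      simpa using congrArg (fun t => t - a) h)
    have := key_sum (x := fun k => x k + a) hinj' (m := m - 1) (by omega)
    simpa [add_sub_add_right_eq_sub] using this
  have hc : ((n : ℝ) - q) = (m : ℝ) := by
    rw [hmdef, Nat.cast_sub (by omega)]
  have hnq1 : n - (q + 1) = m - 1 := by omega
  convert hsum using 1
  · rfl
  · rfl
  rw [hW, hc, hnq1, pow_succ]
  simp only [add_div, Finset.sum_add_distrib, mul_div_assoc]
  rw [hzero, add_zero, ← Finset.mul_sum]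
  ring
end

section
/- Let n ≥ 2 and let x_1,…,x_n be pairwise distinct strictly positive reals. Define W_n(a) = (−1)^n · ∑_{k=1}^n ln(x_k + a) / P_k for a ≥ 0, where P_k = ∏_{i≠k}(x_k − x_i). Then for every a ≥ 0, W_n is differentiable at a with derivative W_n′(a) = −1 / ∏_{k=1}^n (a + x_k). -/
open Finset Polynomial

lemma partial_fraction_key {n : ℕ} (hn : 2 ≤ n) (x : Fin n → ℝ)
    (hdist : Function.Injective x) (t : ℝ) (ht : ∀ k, t ≠ x k) :
    ∑ k, ((t - x k) * ∏ i ∈ Finset.univ.erase k, (x k - x i))⁻¹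
      = (∏ k, (t - x k))⁻¹ := by
  have hne : (Finset.univ : Finset (Fin n)).Nonempty := by
    have : 0 < n := by omega
    exact ⟨⟨0, this⟩, Finset.mem_univ _⟩
  have h1 := Lagrange.sum_basis (s := (Finset.univ : Finset (Fin n))) (v := x)
    hdist.injOn hne
  have h2 := congrArg (Polynomial.eval t) h1
  simp only [Polynomial.eval_finset_sum, Polynomial.eval_one, Lagrange.basis,
    Lagrange.basisDivisor, Polynomial.eval_prod, Polynomial.eval_mul,
    Polynomial.eval_C, Polynomial.eval_sub, Polynomial.eval_X] at h2
  -- h2 : ∑ k, ∏ j ∈ erase univ k, (x k - x j)⁻¹ * (t - x j) = 1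
  have htx : ∀ k, t - x k ≠ 0 := fun k => sub_ne_zero.mpr (ht k)
  have hprod : (∏ k, (t - x k)) ≠ 0 := Finset.prod_ne_zero_iff.mpr fun k _ => htx k
  refine eq_inv_of_mul_eq_one_left ?_
  rw [← h2, Finset.sum_mul]
  refine Finset.sum_congr rfl fun k _ => ?_
  have hPk : (∏ i ∈ Finset.univ.erase k, (x k - x i)) ≠ 0 :=
    Finset.prod_ne_zero_iff.mpr fun i hi =>
      sub_ne_zero.mpr (fun h => (Finset.mem_erase.mp hi).1 (hdist h.symm))
  have hsplit : (∏ j, (t - x j)) = (t - x k) * ∏ j ∈ Finset.univ.erase k, (t - x j) :=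
    (Finset.mul_prod_erase _ _ (Finset.mem_univ k)).symm
  rw [Finset.prod_mul_distrib, Finset.prod_inv_distrib, hsplit, mul_inv,
    mul_comm ((t - x k)⁻¹), mul_assoc, inv_mul_cancel_left₀ (htx k)]

/-- The derivative formula `W_n′(a) = −1 / ∏_k (a + x_k)` for
`W_n(a) = (−1)^n ∑_k ln(x_k+a) / ∏_{i≠k}(x_k − x_i)`. -/
theorem stmt_11 (n : ℕ) (hn : 2 ≤ n) (x : Fin n → ℝ)
    (hpos : ∀ k, 0 < x k) (hdist : Function.Injective x)
    (W : ℝ → ℝ)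
    (hW : ∀ a, W a = (-1 : ℝ) ^ n * ∑ k, Real.log (x k + a) /
        ∏ i ∈ Finset.univ.erase k, (x k - x i))
    (a : ℝ) (ha : 0 ≤ a) :
    HasDerivAt W (-1 / ∏ k, (a + x k)) a := by
  have hxa : ∀ k, x k + a > 0 := fun k => add_pos_of_pos_of_nonneg (hpos k) ha
  set P : Fin n → ℝ := fun k => ∏ i ∈ Finset.univ.erase k, (x k - x i) with hP
  -- derivative of each term
  have hderiv : HasDerivAt (fun b => (-1 : ℝ) ^ n * ∑ k, Real.log (x k + b) / P k)
      ((-1 : ℝ) ^ n * ∑ k, (x k + a)⁻¹ / P k) a := by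
    refine HasDerivAt.const_mul _ ?_
    have : HasDerivAt (fun b => ∑ k, Real.log (x k + b) / P k)
        (∑ k, (1 / (x k + a)) / P k) a := by
      refine HasDerivAt.fun_sum fun k _ => ?_
      have h1 : HasDerivAt (fun b => x k + b) 1 a := (hasDerivAt_id a).const_add (x k)
      have h2 := h1.log (ne_of_gt (hxa k))
      simpa using h2.div_const (P k)
    simpa [one_div] using this
  -- value of the derivative
  have hval : (-1 : ℝ) ^ n * ∑ k, (x k + a)⁻¹ / P k = -1 / ∏ k, (a + x k) := by
    have ht : ∀ k, (-a : ℝ) ≠ x k := fun k => by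
      have := hpos k; intro h; linarith
    have key := partial_fraction_key hn x hdist (-a) ht
    have e1 : ∀ k : Fin n, ((-a : ℝ) - x k) = -(x k + a) := fun k => by ring
    have e2 : (∑ k, (((-a : ℝ) - x k) * P k)⁻¹) = -∑ k, ((x k + a) * P k)⁻¹ := by
      rw [← Finset.sum_neg_distrib]
      refine Finset.sum_congr rfl fun k _ => ?_
      rw [e1 k]; rw [neg_mul]; rw [inv_neg]
    have e3 : (∏ k, ((-a : ℝ) - x k)) = (-1) ^ n * ∏ k, (a + x k) := by
      have : ∀ k : Fin n, ((-a : ℝ) - x k) = (-1) * (a + x k) := fun k => by ring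
      simp_rw [this, Finset.prod_mul_distrib, Finset.prod_const, Finset.card_univ,
        Fintype.card_fin]
    rw [e2, e3] at key
    have hprodpos : (0:ℝ) < ∏ k, (a + x k) :=
      Finset.prod_pos fun k _ => by have := hxa k; linarith
    have hterm : ∀ k : Fin n, (x k + a)⁻¹ / P k = ((x k + a) * P k)⁻¹ := fun k => by
      rw [mul_inv, div_eq_mul_inv]
    simp_rw [hterm]
    have hsum : (∑ k, ((x k + a) * P k)⁻¹) = -((-1) ^ n * ∏ k, (a + x k))⁻¹ := by
      linarith [key]
    rw [hsum, mul_inv]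
    have hpown : ((-1:ℝ) ^ n)⁻¹ = (-1:ℝ) ^ n := by
      rw [← inv_pow, inv_neg, inv_one]
    have hsq : ((-1:ℝ)^n) * ((-1:ℝ)^n) = 1 := by rw [← mul_pow]; norm_num
    rw [hpown, mul_neg, ← mul_assoc, hsq, one_mul, neg_div, one_div]
  rw [← hval]
  have hfun : W = fun b => (-1 : ℝ) ^ n * ∑ k, Real.log (x k + b) / P k := funext hW
  rw [hfun]
  exact hderiv
end

section
/- Let n ≥ 2 and let x_1,…,x_n be pairwise distinct strictly positive reals. For 2 ≤ q ≤ n define W_q(a) = (−1)^q · ∑_{k=1}^n ((x_k + a)^{n−q} · ln(x_k + a)) / P_k, where P_k = ∏_{i≠k}(x_k − x_i). Then as a → ∞, a^{q−1}·W_q(a) tends to ∫_0^1 y^{q−2}(1−y)^{n−q} dy (the Beta integral B(q−1, n−q+1)); in particular W_q(a) → 0 as a → ∞ for every q with 2 ≤ q ≤ n. -/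
open Polynomial Finset intervalIntegral Filter Lagrange

set_option linter.unusedVariables false

lemma stmt12aux_basis_coeff_top {n : ℕ} (x : Fin n → ℝ) (k : Fin n) :
    (Lagrange.basis Finset.univ x k).coeff (n - 1) =
      (∏ i ∈ Finset.univ.erase k, (x k - x i))⁻¹ := by
  have h : Lagrange.basis Finset.univ x k
      = C (∏ j ∈ Finset.univ.erase k, (x k - x j)⁻¹) * nodal (Finset.univ.erase k) x := by
    rw [Lagrange.basis, nodal]
    simp_rw [basisDivisor]
    rw [Finset.prod_mul_distrib, map_prod]
  rw [h, coeff_C_mul]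
  have hcard : (Finset.univ.erase k).card = n - 1 := by
    rw [Finset.card_erase_of_mem (Finset.mem_univ k), Finset.card_univ, Fintype.card_fin]
  have hm : (nodal (Finset.univ.erase k) x).Monic := nodal_monic
  have hnd : (nodal (Finset.univ.erase k) x).natDegree = n - 1 := by
    rw [natDegree_nodal, hcard]
  rw [← hnd, hm.coeff_natDegree, mul_one, ← Finset.prod_inv_distrib]

lemma stmt12aux_sum_eval_div_prod {n : ℕ} (x : Fin n → ℝ) (hx : Function.Injective x)
    (p : ℝ[X]) (hp : p.degree < n) :
    ∑ k, p.eval (x k) / ∏ i ∈ Finset.univ.erase k, (x k - x i) = p.coeff (n - 1) := by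
  have hinj : Set.InjOn x (Finset.univ : Finset (Fin n)) := hx.injOn
  have hcard : ((Finset.univ : Finset (Fin n)).card : WithBot ℕ) = n := by
    rw [Finset.card_univ, Fintype.card_fin]
  have h := Lagrange.eq_interpolate (f := p) hinj (by rw [hcard]; exact hp)
  conv_rhs => rw [h]
  rw [interpolate_apply, finset_sum_coeff]
  refine Finset.sum_congr rfl fun k _ => ?_
  rw [coeff_C_mul, stmt12aux_basis_coeff_top x k, div_eq_mul_inv]

lemma stmt12aux_stmt12aux_sum_eval_div_prod_eval {n : ℕ} (x : Fin n → ℝ) (hx : Function.Injective x)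
    (p : ℝ[X]) (hp : p.degree < n) (z : ℝ) (hz : ∀ k, z ≠ x k) :
    ∑ k, p.eval (x k) / ((z - x k) * ∏ i ∈ Finset.univ.erase k, (x k - x i))
      = p.eval z / ∏ i, (z - x i) := by
  have hinj : Set.InjOn x (Finset.univ : Finset (Fin n)) := hx.injOn
  have hcard : ((Finset.univ : Finset (Fin n)).card : WithBot ℕ) = n := by
    rw [Finset.card_univ, Fintype.card_fin]
  have h := Lagrange.eq_interpolate (f := p) hinj (by rw [hcard]; exact hp)
  have hnodal : eval z (nodal Finset.univ x) = ∏ i, (z - x i) := eval_nodal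
  have hprod_ne : (∏ i, (z - x i)) ≠ 0 :=
    Finset.prod_ne_zero_iff.mpr fun i _ => sub_ne_zero_of_ne (hz i)
  have h2 : p.eval z = ∑ k, p.eval (x k) *
      ((∏ i, (z - x i)) * ((∏ j ∈ Finset.univ.erase k, (x k - x j))⁻¹ * (z - x k)⁻¹)) := by
    conv_lhs => rw [h]
    rw [interpolate_apply, eval_finset_sum]
    refine Finset.sum_congr rfl fun k _ => ?_
    rw [eval_mul, eval_C, eval_basis_not_at_node (Finset.mem_univ k) (hz k), hnodal,
      nodalWeight, Finset.prod_inv_distrib]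
  rw [h2, Finset.sum_div]
  refine Finset.sum_congr rfl fun k _ => ?_
  have h3 : (z - x k) ≠ 0 := sub_ne_zero_of_ne (hz k)
  have h4 : (∏ j ∈ Finset.univ.erase k, (x k - x j)) ≠ 0 := by
    refine Finset.prod_ne_zero_iff.mpr fun i hi => sub_ne_zero_of_ne ?_
    exact fun hc => (Finset.mem_erase.mp hi).1.symm (hx hc)
  field_simp

lemma stmt12aux_denom_pos {a c s : ℝ} (ha : 0 < a) (hc : 0 < c) (hs : s ∈ Set.uIcc (0:ℝ) 1) :
    0 < a + s * c := by
  rw [Set.uIcc_of_le (by norm_num : (0:ℝ) ≤ 1)] at hs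
  nlinarith [hs.1, hs.2]

lemma stmt12aux_cont_int {a c : ℝ} (ha : 0 < a) (hc : 0 < c) :
    IntervalIntegrable (fun s => c / (a + s * c)) MeasureTheory.volume 0 1 := by
  apply ContinuousOn.intervalIntegrable
  apply ContinuousOn.div continuousOn_const
  · fun_prop
  · exact fun s hs => ne_of_gt (stmt12aux_denom_pos ha hc hs)

lemma stmt12aux_log_int {a c : ℝ} (ha : 0 < a) (hc : 0 < c) :
    ∫ s in (0:ℝ)..1, c / (a + s * c) = Real.log (a + c) - Real.log a := by
  have h := intervalIntegral.integral_eq_sub_of_hasDerivAt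
    (f := fun s => Real.log (a + s * c)) (f' := fun s => c / (a + s * c))
    (a := 0) (b := 1) ?_ (stmt12aux_cont_int ha hc)
  · rw [h]; norm_num
  · intro s hs
    have h1 : HasDerivAt (fun s : ℝ => a + s * c) c s := by
      simpa using (hasDerivAt_mul_const c (x := s)).const_add a
    have := (h1.log (ne_of_gt (stmt12aux_denom_pos ha hc hs)))
    simpa [div_eq_mul_inv, mul_comm] using this

lemma stmt12aux_scalar_id (M Q : ℕ) (a s D : ℝ) (ha : a ≠ 0) (hs : s ≠ 0) (hD : D ≠ 0) :
    (-1:ℝ)^(Q+2) * a^(Q+1) * (-(s⁻¹) * ((-(a/s)) * ((-(a/s)) + a)^M / ((-(s⁻¹))^(M+Q+2) * D)))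
      = s^Q * (1-s)^M * (a^(M+Q+2) / D) := by
  have h1 : (-(a/s)) + a = (-(a * (1-s))) / s := by field_simp; ring
  rw [h1, div_pow, neg_pow (a * (1-s)), mul_pow, neg_pow s⁻¹,
    show M + Q + 2 = M + (Q + 2) by omega, pow_add ((-1:ℝ)) M (Q+2),
    pow_add ((-1:ℝ)) Q 2]
  rcases Nat.even_or_odd M with hM | hM <;> rcases Nat.even_or_odd Q with hQ | hQ <;>
    simp only [hM.neg_one_pow, hQ.neg_one_pow] <;> norm_num <;>
    field_simp <;> ring

lemma stmt12aux_pointwise_id (n q : ℕ) (hq2 : 2 ≤ q) (hqn : q ≤ n) (x : Fin n → ℝ)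
    (hpos : ∀ k, 0 < x k) (hdist : Function.Injective x) (a : ℝ) (ha : 0 < a)
    (s : ℝ) (hs : 0 < s) :
    (-1:ℝ)^q * a^(q-1) *
      ∑ k, (x k + a)^(n-q) * (x k / (a + s * x k)) / ∏ i ∈ Finset.univ.erase k, (x k - x i)
      = s^(q-2) * (1-s)^(n-q) * (a^n / ∏ i, (a + s * x i)) := by
  obtain ⟨Q, rfl⟩ : ∃ Q, q = Q + 2 := ⟨q - 2, by omega⟩
  obtain ⟨M, rfl⟩ : ∃ M, n = M + Q + 2 := ⟨n - (Q + 2), by omega⟩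
  rw [show M+Q+2-(Q+2) = M by omega, show Q+2-1 = Q+1 by omega, show Q+2-2 = Q by omega]
  set z : ℝ := -(a/s) with hz_def
  have hz : ∀ k, z ≠ x k := by
    intro k
    have h0 : (0:ℝ) < a / s := by positivity
    have : z < 0 := by rw [hz_def]; linarith
    exact ne_of_lt (lt_trans this (hpos k))
  set p : ℝ[X] := X * (X + C a) ^ M with hp_def
  have hpdeg : p.degree < (M + Q + 2 : ℕ) := by
    have h1 : p.natDegree ≤ M + 1 := by
      apply le_trans (natDegree_mul_le)
      simp [natDegree_pow]
      omega
    calc p.degree ≤ (p.natDegree : WithBot ℕ) := degree_le_natDegree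
      _ ≤ ((M+1 : ℕ) : WithBot ℕ) := by exact_mod_cast h1
      _ < ((M + Q + 2 : ℕ) : WithBot ℕ) := by exact_mod_cast (by omega : M + 1 < M + Q + 2)
  have key := stmt12aux_stmt12aux_sum_eval_div_prod_eval x hdist p hpdeg z hz
  have hpe : ∀ t : ℝ, p.eval t = t * (t + a) ^ M := by
    intro t; simp [hp_def]
  have hDpos : ∀ i, 0 < a + s * x i := by
    intro i; have := mul_pos hs (hpos i); linarith
  have hD : (∏ i, (a + s * x i)) ≠ 0 :=
    ne_of_gt (Finset.prod_pos fun i _ => hDpos i)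
  have hPk : ∀ k : Fin (M+Q+2), (∏ i ∈ Finset.univ.erase k, (x k - x i)) ≠ 0 := by
    intro k
    refine Finset.prod_ne_zero_iff.mpr fun i hi => sub_ne_zero_of_ne ?_
    exact fun hc => (Finset.mem_erase.mp hi).1.symm (hdist hc)
  have hterm : ∀ k, (x k + a)^M * (x k / (a + s * x k)) / ∏ i ∈ Finset.univ.erase k, (x k - x i)
      = (-(s⁻¹)) * (p.eval (x k) / ((z - x k) * ∏ i ∈ Finset.univ.erase k, (x k - x i))) := by
    intro k
    rw [hpe]
    have h1 : z - x k = (-(s⁻¹)) * (a + s * x k) := by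
      rw [hz_def]; field_simp; ring
    have h2 : a + s * x k ≠ 0 := ne_of_gt (hDpos k)
    have hne : (-(s⁻¹) : ℝ) ≠ 0 := neg_ne_zero.mpr (inv_ne_zero hs.ne')
    rw [h1, mul_assoc]
    conv_rhs => rw [mul_div_assoc', mul_div_mul_left _ _ hne]
    rw [mul_div_assoc', div_div]
    ring
  have hprodz : (∏ i, (z - x i)) = (-(s⁻¹))^(M+Q+2) * ∏ i, (a + s * x i) := by
    rw [show ((-(s⁻¹)):ℝ)^(M+Q+2) = ∏ _i : Fin (M+Q+2), -(s⁻¹) by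
      rw [Finset.prod_const, Finset.card_univ, Fintype.card_fin]]
    rw [← Finset.prod_mul_distrib]
    refine Finset.prod_congr rfl fun i _ => ?_
    rw [hz_def]; field_simp; ring
  have hsum : ∑ k, (x k + a)^M * (x k / (a + s * x k)) / ∏ i ∈ Finset.univ.erase k, (x k - x i)
      = (-(s⁻¹)) * (p.eval z / ∏ i, (z - x i)) := by
    rw [← key, Finset.mul_sum]
    exact Finset.sum_congr rfl fun k _ => hterm k
  rw [hsum, hpe, hprodz, hz_def]
  linear_combination stmt12aux_scalar_id M Q a s (∏ i, (a + s * x i)) (ne_of_gt ha) (ne_of_gt hs) hD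

lemma stmt12aux_main_id (n q : ℕ) (hn : 2 ≤ n) (hq2 : 2 ≤ q) (hqn : q ≤ n) (x : Fin n → ℝ)
    (hpos : ∀ k, 0 < x k) (hdist : Function.Injective x) (a : ℝ) (ha : 0 < a) :
    a^(q-1) * ((-1:ℝ)^q * ∑ k, ((x k + a)^(n-q) * Real.log (x k + a)) /
        ∏ i ∈ Finset.univ.erase k, (x k - x i))
      = ∫ s in (0:ℝ)..1, s^(q-2) * (1-s)^(n-q) * (a^n / ∏ i, (a + s * x i)) := by
  have hPk : ∀ k : Fin n, (∏ i ∈ Finset.univ.erase k, (x k - x i)) ≠ 0 := by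
    intro k
    refine Finset.prod_ne_zero_iff.mpr fun i hi => sub_ne_zero_of_ne ?_
    exact fun hc => (Finset.mem_erase.mp hi).1.symm (hdist hc)
  -- integrability of the per-k integrand
  have hint : ∀ k : Fin n, IntervalIntegrable
      (fun s => (x k + a)^(n-q) * (x k / (a + s * x k)) /
        ∏ i ∈ Finset.univ.erase k, (x k - x i)) MeasureTheory.volume 0 1 := by
    intro k
    apply ContinuousOn.intervalIntegrable
    apply ContinuousOn.div_const
    apply ContinuousOn.mul continuousOn_const
    apply ContinuousOn.div continuousOn_const
    · fun_prop
    · exact fun s hs => ne_of_gt (stmt12aux_denom_pos ha (hpos k) hs)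
  -- the vanishing sum
  have hzero : ∑ k, (x k + a)^(n-q) / ∏ i ∈ Finset.univ.erase k, (x k - x i) = 0 := by
    have hdeg : ((X + C a : ℝ[X]) ^ (n-q)).degree < n := by
      have h1 : ((X + C a : ℝ[X]) ^ (n-q)).natDegree = n - q := by
        simp [natDegree_pow]
      calc ((X + C a : ℝ[X]) ^ (n-q)).degree
          ≤ (((X + C a : ℝ[X]) ^ (n-q)).natDegree : WithBot ℕ) := degree_le_natDegree
        _ < (n : WithBot ℕ) := by rw [h1]; exact_mod_cast (by omega : n - q < n)
    have h := stmt12aux_sum_eval_div_prod x hdist ((X + C a) ^ (n-q)) hdeg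
    have hc : ((X + C a : ℝ[X]) ^ (n-q)).coeff (n-1) = 0 := by
      apply coeff_eq_zero_of_natDegree_lt
      simp [natDegree_pow]
      omega
    rw [hc] at h
    rw [← h]
    refine Finset.sum_congr rfl fun k _ => ?_
    simp
  -- log split
  have hsum : ∑ k, ((x k + a)^(n-q) * Real.log (x k + a)) /
      ∏ i ∈ Finset.univ.erase k, (x k - x i)
      = ∑ k, ∫ s in (0:ℝ)..1, (x k + a)^(n-q) * (x k / (a + s * x k)) /
          ∏ i ∈ Finset.univ.erase k, (x k - x i) := by
    have hlog : ∀ k : Fin n, Real.log (x k + a)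
        = Real.log a + ∫ s in (0:ℝ)..1, x k / (a + s * x k) := by
      intro k
      rw [stmt12aux_log_int ha (hpos k), add_comm a (x k)]
      ring
    have step : ∀ k : Fin n, ((x k + a)^(n-q) * Real.log (x k + a)) /
        ∏ i ∈ Finset.univ.erase k, (x k - x i)
        = Real.log a * ((x k + a)^(n-q) / ∏ i ∈ Finset.univ.erase k, (x k - x i))
          + ∫ s in (0:ℝ)..1, (x k + a)^(n-q) * (x k / (a + s * x k)) /
              ∏ i ∈ Finset.univ.erase k, (x k - x i) := by
      intro k
      rw [hlog k]
      have hpull : ∫ s in (0:ℝ)..1, (x k + a)^(n-q) * (x k / (a + s * x k)) /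
          ∏ i ∈ Finset.univ.erase k, (x k - x i)
          = ((x k + a)^(n-q) / ∏ i ∈ Finset.univ.erase k, (x k - x i)) *
            ∫ s in (0:ℝ)..1, x k / (a + s * x k) := by
        exact (intervalIntegral.integral_congr (g := fun s =>
            ((x k + a)^(n-q) / ∏ i ∈ Finset.univ.erase k, (x k - x i)) * (x k / (a + s * x k)))
            (fun s _ => by ring)).trans
          (intervalIntegral.integral_const_mul _ _)
      rw [hpull]
      ring
    rw [Finset.sum_congr rfl fun k _ => step k, Finset.sum_add_distrib, ← Finset.mul_sum,
      hzero, mul_zero, zero_add]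
  rw [hsum, ← intervalIntegral.integral_finset_sum (s := Finset.univ)
    (f := fun k s => (x k + a)^(n-q) * (x k / (a + s * x k)) /
      ∏ i ∈ Finset.univ.erase k, (x k - x i)) (fun k _ => hint k)]
  rw [← mul_assoc, ← intervalIntegral.integral_const_mul (a^(q-1) * (-1:ℝ)^q)
    (fun s => ∑ k, (x k + a)^(n-q) * (x k / (a + s * x k)) /
      ∏ i ∈ Finset.univ.erase k, (x k - x i))]
  refine intervalIntegral.integral_congr_ae ?_
  rw [Set.uIoc_of_le (by norm_num : (0:ℝ) ≤ 1)]
  filter_upwards [] with s hs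
  have hs0 : 0 < s := hs.1
  have := stmt12aux_pointwise_id n q hq2 hqn x hpos hdist a ha s hs0
  rw [← this]
  ring

lemma stmt12aux_tendsto_ratio (c : ℝ) (hc : 0 < c) :
    Tendsto (fun a : ℝ => a / (a + c)) atTop (nhds 1) := by
  have h1 : Tendsto (fun a : ℝ => c / (a + c)) atTop (nhds 0) :=
    Tendsto.div_atTop tendsto_const_nhds (tendsto_atTop_add_const_right _ c tendsto_id)
  have h2 : Tendsto (fun a : ℝ => 1 - c / (a + c)) atTop (nhds 1) := by
    simpa using (tendsto_const_nhds (x := (1:ℝ))).sub h1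
  refine Tendsto.congr' ?_ h2
  filter_upwards [eventually_gt_atTop 0] with a ha
  have : a + c ≠ 0 := by positivity
  field_simp
  ring

set_option maxHeartbeats 1000000 in
/-- As `a → ∞`, `a^{q−1} W_q(a)` tends to the Beta integral
`∫_0^1 y^{q−2}(1−y)^{n−q} dy`; in particular `W_q(a) → 0` for `2 ≤ q ≤ n`. -/
theorem stmt_12 (n : ℕ) (hn : 2 ≤ n) (x : Fin n → ℝ)
    (hpos : ∀ k, 0 < x k) (hdist : Function.Injective x)
    (q : ℕ) (hq2 : 2 ≤ q) (hqn : q ≤ n)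
    (W : ℝ → ℝ)
    (hW : ∀ a, W a = (-1 : ℝ) ^ q * ∑ k, ((x k + a) ^ (n - q) * Real.log (x k + a)) /
        ∏ i ∈ Finset.univ.erase k, (x k - x i)) :
    Filter.Tendsto (fun a => a ^ (q - 1) * W a) Filter.atTop
      (nhds (∫ y in (0 : ℝ)..1, y ^ (q - 2) * (1 - y) ^ (n - q)))
    ∧ Filter.Tendsto W Filter.atTop (nhds 0) := by
  set B : ℝ := ∫ y in (0:ℝ)..1, y ^ (q-2) * (1-y) ^ (n-q) with hB
  -- integrability of base integrand
  have hint1 : IntervalIntegrable (fun s : ℝ => s^(q-2) * (1-s)^(n-q))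
      MeasureTheory.volume 0 1 := by
    apply ContinuousOn.intervalIntegrable; fun_prop
  have hbase_nonneg : ∀ s ∈ Set.Icc (0:ℝ) 1, 0 ≤ s^(q-2) * (1-s)^(n-q) := by
    intro s hs
    have h1 : 0 ≤ s := hs.1
    have h2 : 0 ≤ 1 - s := by linarith [hs.2]
    positivity
  -- bounds for a > 0
  have hbounds : ∀ a : ℝ, 0 < a →
      (∏ i, a / (a + x i)) * B ≤ a ^ (q-1) * W a ∧ a ^ (q-1) * W a ≤ B := by
    intro a ha
    have hFa : a ^ (q-1) * W a
        = ∫ s in (0:ℝ)..1, s^(q-2) * (1-s)^(n-q) * (a^n / ∏ i, (a + s * x i)) := by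
      rw [hW a]
      exact stmt12aux_main_id n q hn hq2 hqn x hpos hdist a ha
    have hdpos : ∀ (s : ℝ), s ∈ Set.Icc (0:ℝ) 1 → ∀ i, 0 < a + s * x i := by
      intro s hs i
      have := mul_nonneg hs.1 (hpos i).le
      linarith
    have hint2 : IntervalIntegrable
        (fun s : ℝ => s^(q-2) * (1-s)^(n-q) * (a^n / ∏ i, (a + s * x i)))
        MeasureTheory.volume 0 1 := by
      apply ContinuousOn.intervalIntegrable
      apply ContinuousOn.mul (by fun_prop)
      apply ContinuousOn.div continuousOn_const
      · fun_prop
      · intro s hs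
        rw [Set.uIcc_of_le (by norm_num : (0:ℝ) ≤ 1)] at hs
        exact ne_of_gt (Finset.prod_pos fun i _ => hdpos s hs i)
    have hprod_le : ∀ s ∈ Set.Icc (0:ℝ) 1,
        a ^ n ≤ (∏ i, (a + s * x i)) ∧ (∏ i, (a + s * x i)) ≤ ∏ i, (a + x i) := by
      intro s hs
      constructor
      · rw [show (a:ℝ)^n = ∏ _i : Fin n, a by
          rw [Finset.prod_const, Finset.card_univ, Fintype.card_fin]]
        apply Finset.prod_le_prod (fun i _ => ha.le)
        intro i _
        have := mul_nonneg hs.1 (hpos i).le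
        linarith
      · apply Finset.prod_le_prod (fun i _ => (hdpos s hs i).le)
        intro i _
        have h1 : s * x i ≤ x i := by
          nlinarith [hs.2, (hpos i).le]
        linarith
    constructor
    · -- lower bound
      rw [hFa, hB, show (∏ i, a / (a + x i)) * ∫ y in (0:ℝ)..1, y ^ (q-2) * (1-y) ^ (n-q)
          = ∫ y in (0:ℝ)..1, (∏ i, a / (a + x i)) * (y ^ (q-2) * (1-y) ^ (n-q))
          from (intervalIntegral.integral_const_mul _ _).symm]
      apply intervalIntegral.integral_mono_on (by norm_num) (hint1.const_mul _) hint2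
      intro s hs
      have hP1 : 0 < ∏ i, (a + s * x i) := Finset.prod_pos fun i _ => hdpos s hs i
      have hP2 : 0 < ∏ i, (a + x i) := Finset.prod_pos fun i _ => by
        have := hpos i; linarith
      have hratio : (∏ i, a / (a + x i)) ≤ a^n / ∏ i, (a + s * x i) := by
        rw [Finset.prod_div_distrib, show (∏ _i : Fin n, a) = a^n by
          rw [Finset.prod_const, Finset.card_univ, Fintype.card_fin]]
        apply div_le_div_of_nonneg_left (by positivity) hP1 (hprod_le s hs).2
      calc (∏ i, a / (a + x i)) * (s ^ (q-2) * (1-s) ^ (n-q))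
          ≤ (a^n / ∏ i, (a + s * x i)) * (s ^ (q-2) * (1-s) ^ (n-q)) :=
            mul_le_mul_of_nonneg_right hratio (hbase_nonneg s hs)
        _ = s ^ (q-2) * (1-s) ^ (n-q) * (a^n / ∏ i, (a + s * x i)) := by ring
    · -- upper bound
      rw [hFa, hB]
      apply intervalIntegral.integral_mono_on (by norm_num) hint2 hint1
      intro s hs
      have hP1 : 0 < ∏ i, (a + s * x i) := Finset.prod_pos fun i _ => hdpos s hs i
      have hle1 : a^n / (∏ i, (a + s * x i)) ≤ 1 := by
        rw [div_le_one hP1]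
        exact (hprod_le s hs).1
      calc s ^ (q-2) * (1-s) ^ (n-q) * (a^n / ∏ i, (a + s * x i))
          ≤ s ^ (q-2) * (1-s) ^ (n-q) * 1 :=
            mul_le_mul_of_nonneg_left hle1 (hbase_nonneg s hs)
        _ = s ^ (q-2) * (1-s) ^ (n-q) := by ring
  -- squeeze
  have hg : Tendsto (fun a : ℝ => (∏ i, a / (a + x i)) * B) atTop (nhds B) := by
    have h1 : Tendsto (fun a : ℝ => ∏ i, a / (a + x i)) atTop (nhds 1) := by
      have := tendsto_finset_prod (Finset.univ : Finset (Fin n))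
        (fun i _ => stmt12aux_tendsto_ratio (x i) (hpos i))
      simpa using this
    simpa using h1.mul (tendsto_const_nhds (x := B))
  have hfirst : Tendsto (fun a => a ^ (q-1) * W a) atTop (nhds B) := by
    apply tendsto_of_tendsto_of_tendsto_of_le_of_le' hg tendsto_const_nhds
    · filter_upwards [eventually_gt_atTop 0] with a ha
      exact (hbounds a ha).1
    · filter_upwards [eventually_gt_atTop 0] with a ha
      exact (hbounds a ha).2
  refine ⟨hfirst, ?_⟩
  have hq1 : q - 1 ≠ 0 := by omega
  have hpowinv : Tendsto (fun a : ℝ => (a ^ (q-1))⁻¹) atTop (nhds 0) :=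
    (tendsto_pow_atTop hq1).inv_tendsto_atTop
  have h0 : Tendsto (fun a : ℝ => (a ^ (q-1))⁻¹ * (a ^ (q-1) * W a)) atTop (nhds 0) := by
    simpa using hpowinv.mul hfirst
  refine Tendsto.congr' ?_ h0
  filter_upwards [eventually_gt_atTop 0] with a ha
  have : (a : ℝ) ^ (q-1) ≠ 0 := by positivity
  field_simp
end

section
/- Let n ≥ 2 and let x_1,…,x_n be pairwise distinct strictly positive reals with ∑_k x_k = 1. Define W_n(a) = (−1)^n · ∑_{k=1}^n ln(x_k + a) / P_k, where P_k = ∏_{i≠k}(x_k − x_i). Then for every a ≥ 0, W_n(a) ≥ 1 / ((n−1)·(a + 1/n)^{n−1}). In particular W_n(0) ≥ n^{n−1}/(n−1). -/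
open Finset Polynomial

variable {n : ℕ} {x : Fin n → ℝ}

noncomputable def Pk (x : Fin n → ℝ) (k : Fin n) : ℝ :=
  ∏ i ∈ Finset.univ.erase k, (x k - x i)

lemma Pk_ne_zero (hdist : Function.Injective x) (k : Fin n) : Pk x k ≠ 0 := by
  refine Finset.prod_ne_zero_iff.2 fun i hi => sub_ne_zero_of_ne ?_
  exact fun h => (Finset.mem_erase.1 hi).1 (hdist h).symm

lemma prod_erase_sub (k : Fin n) :
    ∏ j ∈ Finset.univ.erase k, (x j - x k) = (-1 : ℝ) ^ (n - 1) * Pk x k := by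
  have h : ∀ j ∈ Finset.univ.erase k, x j - x k = (-1) * (x k - x j) := by intros; ring
  rw [Finset.prod_congr rfl h, Finset.prod_mul_distrib, Finset.prod_const,
    Finset.card_erase_of_mem (Finset.mem_univ k), Finset.card_univ, Fintype.card_fin, Pk]

lemma polyQ (hn : 1 ≤ n) (hdist : Function.Injective x) :
    ∑ k, C (((-1 : ℝ) ^ (n - 1) * Pk x k)⁻¹) * ∏ j ∈ Finset.univ.erase k, (X + C (x j))
      = 1 := by
  have hcard : (Finset.univ : Finset (Fin n)).card = n := by simp
  have hdeg : ∀ k : Fin n,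
      (∏ j ∈ Finset.univ.erase k, (X + C (x j) : ℝ[X])).degree = ((n - 1 : ℕ) : WithBot ℕ) := by
    intro k
    rw [Polynomial.degree_prod]
    calc ∑ j ∈ Finset.univ.erase k, (X + C (x j) : ℝ[X]).degree
        = ∑ _j ∈ Finset.univ.erase k, (1 : WithBot ℕ) :=
          Finset.sum_congr rfl fun j _ => Polynomial.degree_X_add_C (x j)
      _ = ((n - 1 : ℕ) : WithBot ℕ) := by
          rw [Finset.sum_const, Finset.card_erase_of_mem (Finset.mem_univ k), hcard]
          simp
  refine Polynomial.eq_of_degrees_lt_of_eval_index_eq (v := fun k => -(x k)) Finset.univ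
    (fun a _ b _ h => hdist (neg_injective h)) ?_ ?_ ?_
  · rw [hcard]
    refine lt_of_le_of_lt (Polynomial.degree_sum_le _ _) ?_
    rw [Finset.sup_lt_iff (by exact_mod_cast WithBot.bot_lt_coe n)]
    intro k _
    refine lt_of_le_of_lt (Polynomial.degree_mul_le _ _) ?_
    rw [hdeg k]
    calc (C (((-1 : ℝ) ^ (n - 1) * Pk x k)⁻¹)).degree + ((n - 1 : ℕ) : WithBot ℕ)
        ≤ 0 + ((n - 1 : ℕ) : WithBot ℕ) := add_le_add_left Polynomial.degree_C_le _
      _ = ((n - 1 : ℕ) : WithBot ℕ) := zero_add _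
      _ < (n : WithBot ℕ) := by exact_mod_cast Nat.sub_lt (by omega) one_pos
  · rw [hcard, Polynomial.degree_one]
    exact_mod_cast Nat.lt_of_lt_of_le Nat.zero_lt_one hn
  · intro k _
    rw [Polynomial.eval_one, Polynomial.eval_finset_sum]
    rw [Finset.sum_eq_single k]
    · rw [Polynomial.eval_mul, Polynomial.eval_C, Polynomial.eval_prod]
      have : ∀ j ∈ Finset.univ.erase k, ((X + C (x j) : ℝ[X])).eval (-(x k)) = x j - x k := by
        intro j _; simp; ring
      rw [Finset.prod_congr rfl this, prod_erase_sub k]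
      exact inv_mul_cancel₀ (mul_ne_zero (pow_ne_zero _ (by norm_num)) (Pk_ne_zero hdist k))
    · intro i _ hik
      rw [Polynomial.eval_mul, Polynomial.eval_prod]
      have hk : k ∈ Finset.univ.erase i := Finset.mem_erase.2 ⟨Ne.symm hik, Finset.mem_univ k⟩
      refine mul_eq_zero_of_right _ (Finset.prod_eq_zero hk ?_)
      simp
    · intro h; exact absurd (Finset.mem_univ k) h

lemma monic_prod_erase (k : Fin n) :
    (∏ j ∈ Finset.univ.erase k, (X + C (x j) : ℝ[X])).Monic :=
  Polynomial.monic_prod_of_monic _ _ fun j _ => Polynomial.monic_X_add_C (x j)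

lemma natDeg_prod_erase (k : Fin n) :
    (∏ j ∈ Finset.univ.erase k, (X + C (x j) : ℝ[X])).natDegree = n - 1 := by
  rw [Polynomial.natDegree_prod_of_monic _ _ fun j _ => Polynomial.monic_X_add_C (x j)]
  simp [Finset.card_erase_of_mem]

lemma sum_inv_Pk (hn : 2 ≤ n) (hdist : Function.Injective x) :
    ∑ k, (Pk x k)⁻¹ = 0 := by
  have hQ := polyQ (le_trans (by norm_num) hn) hdist
  have hcoeff := congrArg (fun p : ℝ[X] => p.coeff (n - 1)) hQ
  simp only [Polynomial.finset_sum_coeff, Polynomial.coeff_C_mul] at hcoeff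
  have h1 : ∀ k : Fin n, (∏ j ∈ Finset.univ.erase k, (X + C (x j) : ℝ[X])).coeff (n - 1) = 1 := by
    intro k
    have := (monic_prod_erase (x := x) k)
    rw [← natDeg_prod_erase (x := x) k]
    exact this
  simp only [h1, mul_one, Polynomial.coeff_one] at hcoeff
  have h2 : (n - 1 ≠ 0) := by omega
  rw [if_neg (by simpa using h2)] at hcoeff
  have h3 : ∀ k : Fin n, ((-1 : ℝ) ^ (n - 1) * Pk x k)⁻¹ = (-1 : ℝ) ^ (n - 1) * (Pk x k)⁻¹ := by
    intro k
    rw [mul_inv]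
    congr 1
    rw [← inv_pow]
    norm_num
  rw [Finset.sum_congr rfl fun k _ => h3 k, ← Finset.mul_sum] at hcoeff
  rcases mul_eq_zero.1 hcoeff with h | h
  · exact absurd h (pow_ne_zero _ (by norm_num))
  · exact h

lemma partial_frac (hn : 1 ≤ n) (hdist : Function.Injective x) (t : ℝ)
    (ht : ∀ k, x k + t ≠ 0) :
    ∑ k, (x k + t)⁻¹ * (Pk x k)⁻¹ = (-1 : ℝ) ^ (n - 1) * (∏ k, (x k + t))⁻¹ := by
  have hQ := congrArg (fun p : ℝ[X] => p.eval t) (polyQ hn hdist)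
  simp only [Polynomial.eval_finset_sum, Polynomial.eval_one, Polynomial.eval_mul,
    Polynomial.eval_C, Polynomial.eval_prod, Polynomial.eval_add, Polynomial.eval_X,
    Polynomial.eval_C, add_comm t] at hQ
  have hprod : ∀ k : Fin n, ∏ j ∈ Finset.univ.erase k, (x j + t)
      = (∏ j, (x j + t)) * (x k + t)⁻¹ := by
    intro k
    rw [← Finset.mul_prod_erase Finset.univ _ (Finset.mem_univ k), mul_comm (x k + t),
      mul_assoc, mul_inv_cancel₀ (ht k), mul_one]
  have key : ∀ k : Fin n, ((-1 : ℝ) ^ (n - 1) * Pk x k)⁻¹ * ∏ j ∈ Finset.univ.erase k, (x j + t)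
      = (-1 : ℝ) ^ (n - 1) * ((x k + t)⁻¹ * (Pk x k)⁻¹) * ∏ j, (x j + t) := by
    intro k
    rw [hprod k, mul_inv]
    have : ((-1 : ℝ) ^ (n - 1))⁻¹ = (-1 : ℝ) ^ (n - 1) := by rw [← inv_pow]; norm_num
    rw [this]; ring
  rw [Finset.sum_congr rfl fun k _ => key k, ← Finset.sum_mul, ← Finset.mul_sum] at hQ
  have hpne : (∏ j, (x j + t)) ≠ 0 := Finset.prod_ne_zero_iff.2 fun j _ => ht j
  have hee : (-1 : ℝ) ^ (n - 1) * (-1 : ℝ) ^ (n - 1) = 1 := by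
    rw [← pow_add]
    exact Even.neg_one_pow ⟨n - 1, rfl⟩
  have h4 : (∑ k, (x k + t)⁻¹ * (Pk x k)⁻¹) * ∏ j, (x j + t) = (-1 : ℝ) ^ (n - 1) := by
    have h5 := congrArg (fun y => (-1 : ℝ) ^ (n - 1) * y) hQ
    simpa [← mul_assoc, hee] using h5
  rw [eq_comm, ← h4, mul_assoc, mul_inv_cancel₀ hpne, mul_one]

/-- The lower bound `W_n(a) ≥ 1/((n−1)(a+1/n)^{n−1})` for all `a ≥ 0`; in particular
`W_n(0) ≥ n^{n−1}/(n−1)`. -/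
theorem stmt_13 (n : ℕ) (hn : 2 ≤ n) (x : Fin n → ℝ)
    (hpos : ∀ k, 0 < x k) (hdist : Function.Injective x)
    (hsum : ∑ k, x k = 1)
    (W : ℝ → ℝ)
    (hW : ∀ a, W a = (-1 : ℝ) ^ n * ∑ k, Real.log (x k + a) /
        ∏ i ∈ Finset.univ.erase k, (x k - x i)) :
    (∀ a : ℝ, 0 ≤ a → 1 / (((n : ℝ) - 1) * (a + 1 / n) ^ (n - 1)) ≤ W a)
    ∧ (n : ℝ) ^ (n - 1) / ((n : ℝ) - 1) ≤ W 0 := by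
  have hn1 : 1 ≤ n := by omega
  have hnR : (2 : ℝ) ≤ (n : ℝ) := by exact_mod_cast hn
  have hnR0 : (0 : ℝ) < n := by linarith
  have hc : (0 : ℝ) < (n : ℝ) - 1 := by linarith
  have hW' : ∀ a, W a = (-1 : ℝ) ^ n * ∑ k, Real.log (x k + a) / Pk x k := hW
  -- G : the lower bound function
  set G : ℝ → ℝ := fun t => 1 / (((n : ℝ) - 1) * (t + 1 / n) ^ (n - 1)) with hG
  -- positivity
  have hxt : ∀ t : ℝ, 0 ≤ t → ∀ k : Fin n, 0 < x k + t := fun t ht k => by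
    have := hpos k; linarith
  have hppos : ∀ t : ℝ, 0 ≤ t → 0 < ∏ k, (x k + t) := fun t ht =>
    Finset.prod_pos fun k _ => hxt t ht k
  have hupos : ∀ t : ℝ, 0 ≤ t → 0 < t + 1 / (n : ℝ) := fun t ht => by positivity
  -- Step: AM-GM
  have amgm : ∀ t : ℝ, 0 ≤ t → ∏ k, (x k + t) ≤ (t + 1 / n) ^ n := by
    intro t ht
    have h1 : ∏ k, ((x k + t) ^ ((1 : ℝ)/n)) ≤ ∑ k, (1/(n:ℝ)) * (x k + t) := by
      have := Real.geom_mean_le_arith_mean_weighted Finset.univ (fun _ => (1 : ℝ)/n)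
        (fun k => x k + t) (fun i _ => by positivity)
        (by simp [Finset.card_univ]; field_simp) (fun i _ => (hxt t ht i).le)
      simpa using this
    have h2 : ∑ k, (1/(n:ℝ)) * (x k + t) = t + 1/n := by
      rw [← Finset.mul_sum, Finset.sum_add_distrib, hsum, Finset.sum_const, Finset.card_univ,
        Fintype.card_fin, nsmul_eq_mul]
      field_simp
      ring
    have h3 : (∏ k, ((x k + t) ^ ((1 : ℝ)/n))) ^ n = ∏ k, (x k + t) := by
      rw [← Finset.prod_pow]
      refine Finset.prod_congr rfl fun k _ => ?_
      rw [← Real.rpow_natCast ((x k + t) ^ ((1:ℝ)/n)) n, ← Real.rpow_mul (hxt t ht k).le]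
      rw [one_div, inv_mul_cancel₀ (ne_of_gt hnR0), Real.rpow_one]
    calc ∏ k, (x k + t) = (∏ k, ((x k + t) ^ ((1 : ℝ)/n))) ^ n := h3.symm
      _ ≤ (t + 1/n) ^ n := by
          refine pow_le_pow_left₀ (Finset.prod_nonneg fun k _ => ?_) (h2 ▸ h1) n
          exact Real.rpow_nonneg (hxt t ht k).le _
  -- Step: derivative of W
  have hWd : ∀ t : ℝ, 0 ≤ t → HasDerivAt W (-(∏ k, (x k + t))⁻¹) t := by
    intro t ht
    have hWeq : W = fun a => (-1 : ℝ) ^ n * ∑ k, Real.log (x k + a) / Pk x k :=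
      funext fun a => hW' a
    rw [hWeq]
    have hterm : ∀ k : Fin n, HasDerivAt (fun a => Real.log (x k + a) / Pk x k)
        ((x k + t)⁻¹ * (Pk x k)⁻¹) t := by
      intro k
      have h0 : HasDerivAt (fun a : ℝ => x k + a) 1 t := (hasDerivAt_id t).const_add (x k)
      have h1 : HasDerivAt (fun a => Real.log (x k + a)) (1 / (x k + t)) t :=
        h0.log (ne_of_gt (hxt t ht k))
      have := h1.div_const (Pk x k)
      simpa [one_div, div_eq_mul_inv] using this
    have hsumd : HasDerivAt (fun a => ∑ k, Real.log (x k + a) / Pk x k)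
        (∑ k, (x k + t)⁻¹ * (Pk x k)⁻¹) t := HasDerivAt.fun_sum fun k _ => hterm k
    have := hsumd.const_mul ((-1 : ℝ) ^ n)
    refine this.congr_deriv (Eq.symm ?_)
    rw [partial_frac hn1 hdist t (fun k => ne_of_gt (hxt t ht k))]
    have hsplit : (-1 : ℝ) ^ n = (-1 : ℝ) ^ (n - 1) * (-1) := by
      rw [← pow_succ]
      congr 1
      omega
    rw [hsplit]
    have hee : (-1 : ℝ) ^ (n - 1) * (-1 : ℝ) ^ (n - 1) = 1 := by
      rw [← pow_add]; exact Even.neg_one_pow ⟨n - 1, rfl⟩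
    calc -(∏ k, (x k + t))⁻¹
        = ((-1:ℝ)^(n-1) * (-1:ℝ)^(n-1)) * -(∏ k, (x k + t))⁻¹ := by rw [hee, one_mul]
      _ = (-1:ℝ)^(n-1) * (-1) * ((-1:ℝ)^(n-1) * (∏ k, (x k + t))⁻¹) := by ring
  -- Step: derivative of G
  have hGd : ∀ t : ℝ, 0 ≤ t → HasDerivAt G (-((t + 1 / n) ^ n)⁻¹) t := by
    intro t ht
    have hu := hupos t ht
    have hden : HasDerivAt (fun s : ℝ => ((n:ℝ) - 1) * (s + 1/n) ^ (n-1))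
        (((n:ℝ) - 1) * (((n-1 : ℕ) : ℝ) * (t + 1/n) ^ (n - 1 - 1) * 1)) t := by
      exact (((hasDerivAt_id t).add_const ((1:ℝ)/n)).pow (n-1)).const_mul _
    have hdne : ((n:ℝ) - 1) * (t + 1/n) ^ (n-1) ≠ 0 := by positivity
    have := (hden.inv hdne)
    have hGfun : G = fun s : ℝ => (((n:ℝ) - 1) * (s + 1/(n:ℝ)) ^ (n-1))⁻¹ :=
      funext fun s => one_div _
    rw [hGfun]
    refine this.congr_deriv (Eq.symm ?_)
    rw [neg_div, neg_inj]
    have hcast : ((n - 1 : ℕ) : ℝ) = (n : ℝ) - 1 := by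
      push_cast [Nat.cast_sub hn1]; ring
    rw [hcast, mul_one]
    rw [eq_div_iff (pow_ne_zero 2 hdne)]
    have hsq : (((t + 1/(n:ℝ)) ^ (n-1)) : ℝ) ^ 2
        = (t + 1/(n:ℝ)) ^ n * (t + 1/(n:ℝ)) ^ (n - 1 - 1) := by
      rw [← pow_mul, ← pow_add]
      congr 1
      omega
    rw [mul_pow, hsq]
    have hcancel : ((t + 1/(n:ℝ)) ^ n)⁻¹ * (t + 1/(n:ℝ)) ^ n = 1 :=
      inv_mul_cancel₀ (pow_ne_zero _ hu.ne')
    calc ((t + 1/(n:ℝ))^n)⁻¹ * (((n:ℝ)-1)^2 * ((t+1/(n:ℝ))^n * (t+1/(n:ℝ))^(n-1-1)))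
        = (((t + 1/(n:ℝ))^n)⁻¹ * (t+1/(n:ℝ))^n) * (((n:ℝ)-1)^2 * (t+1/(n:ℝ))^(n-1-1)) := by
          ring
      _ = ((n:ℝ)-1) * (((n:ℝ)-1) * (t+1/(n:ℝ))^(n-1-1)) := by rw [hcancel]; ring
  -- Step: W tends to 0
  have key : ∀ t : ℝ, ∑ k, (Real.log (x k + t) - Real.log (1 + t)) * (Pk x k)⁻¹
      = ∑ k, Real.log (x k + t) / Pk x k := by
    intro t
    rw [Finset.sum_congr rfl fun k _ => sub_mul _ _ ((Pk x k)⁻¹), Finset.sum_sub_distrib,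
      ← Finset.mul_sum, sum_inv_Pk hn hdist, mul_zero, sub_zero]
    exact Finset.sum_congr rfl fun k _ => (div_eq_mul_inv _ _).symm
  have hWlim : Filter.Tendsto W Filter.atTop (nhds 0) := by
    have hWeq2 : W = fun t => (-1 : ℝ) ^ n *
        ∑ k, (Real.log (x k + t) - Real.log (1 + t)) * (Pk x k)⁻¹ :=
      funext fun t => by rw [hW' t, key t]
    rw [hWeq2]
    have hterm : ∀ k : Fin n, Filter.Tendsto
        (fun t => Real.log (x k + t) - Real.log (1 + t)) Filter.atTop (nhds 0) := by
      intro k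
      have hratio : Filter.Tendsto (fun t : ℝ => (x k + t) / (1 + t)) Filter.atTop (nhds 1) := by
        have h0 : Filter.Tendsto (fun t : ℝ => (x k - 1) / (1 + t)) Filter.atTop (nhds 0) :=
          Filter.Tendsto.div_atTop tendsto_const_nhds
            (Filter.tendsto_atTop_add_const_left _ 1 Filter.tendsto_id)
        have h1 := h0.const_add (1 : ℝ)
        rw [add_zero] at h1
        refine h1.congr' ?_
        filter_upwards [Filter.eventually_gt_atTop (0 : ℝ)] with t ht0
        have h1t : (1 : ℝ) + t ≠ 0 := by linarith
        field_simp
        ring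
      have hlog := (Real.continuousAt_log one_ne_zero).tendsto.comp hratio
      rw [Real.log_one] at hlog
      refine hlog.congr' ?_
      filter_upwards [Filter.eventually_gt_atTop (0 : ℝ)] with t ht0
      have h1 : x k + t > 0 := by have := hpos k; linarith
      have h2 : (1 : ℝ) + t > 0 := by linarith
      simp only [Function.comp_apply]
      rw [Real.log_div (ne_of_gt h1) (ne_of_gt h2)]
    have hsumlim : Filter.Tendsto
        (fun t => ∑ k, (Real.log (x k + t) - Real.log (1 + t)) * (Pk x k)⁻¹)
        Filter.atTop (nhds (∑ k : Fin n, (0 : ℝ) * (Pk x k)⁻¹)) :=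
      tendsto_finset_sum _ fun k _ => (hterm k).mul_const _
    simp only [zero_mul, Finset.sum_const_zero] at hsumlim
    have := hsumlim.const_mul ((-1 : ℝ) ^ n)
    simpa using this
  -- Step: G tends to 0
  have hGlim : Filter.Tendsto G Filter.atTop (nhds 0) := by
    have h1 : Filter.Tendsto (fun t : ℝ => ((n:ℝ) - 1) * (t + 1/n) ^ (n-1))
        Filter.atTop Filter.atTop := by
      refine Filter.Tendsto.const_mul_atTop hc ?_
      exact (Filter.tendsto_pow_atTop (by omega : n - 1 ≠ 0)).comp
        (Filter.tendsto_atTop_add_const_right _ _ Filter.tendsto_id)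
    have h2 := h1.inv_tendsto_atTop
    have h3 : (fun t : ℝ => 1 / (((n:ℝ) - 1) * (t + 1/n) ^ (n-1)))
        = (fun t : ℝ => ((n:ℝ) - 1) * (t + 1/n) ^ (n-1))⁻¹ := funext fun t => one_div _
    rw [hG, h3]
    exact h2
  -- Main bound
  have main : ∀ a : ℝ, 0 ≤ a → 1 / (((n : ℝ) - 1) * (a + 1 / n) ^ (n - 1)) ≤ W a := by
    intro a ha
    have hant : AntitoneOn (fun t => W t - G t) (Set.Ici a) := by
      refine antitoneOn_of_deriv_nonpos (convex_Ici a) ?_ ?_ ?_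
      · exact fun t ht => ((hWd t (ha.trans ht)).sub (hGd t (ha.trans ht))).continuousAt.continuousWithinAt
      · intro t ht
        rw [interior_Ici] at ht
        have h0t : (0:ℝ) ≤ t := ha.trans ht.le
        exact ((hWd t h0t).sub (hGd t h0t)).differentiableAt.differentiableWithinAt
      · intro t ht
        rw [interior_Ici] at ht
        have h0t : (0:ℝ) ≤ t := ha.trans ht.le
        have hD := (hWd t h0t).sub (hGd t h0t)
        rw [show (fun t => W t - G t) = W - G from rfl, hD.deriv]
        have h5 : ((t + 1/(n:ℝ)) ^ n)⁻¹ ≤ (∏ k, (x k + t))⁻¹ :=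
          inv_anti₀ (hppos t h0t) (amgm t h0t)
        linarith
    have hlim0 : Filter.Tendsto (fun t => W t - G t) Filter.atTop (nhds 0) := by
      simpa using hWlim.sub hGlim
    have hge : (0:ℝ) ≤ W a - G a := by
      refine le_of_tendsto hlim0 ?_
      filter_upwards [Filter.eventually_ge_atTop a] with t hta
      exact hant Set.self_mem_Ici hta hta
    have hGa : G a = 1 / (((n : ℝ) - 1) * (a + 1 / n) ^ (n - 1)) := rfl
    linarith
  refine ⟨main, ?_⟩
  have h0 := main 0 le_rfl
  have heq : 1 / (((n : ℝ) - 1) * ((0:ℝ) + 1 / n) ^ (n - 1))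
      = (n : ℝ) ^ (n - 1) / ((n : ℝ) - 1) := by
    rw [zero_add, div_pow, one_pow]
    rw [div_eq_div_iff (by positivity) (ne_of_gt hc)]
    field_simp
  linarith
end

section
/- Let n ≥ 2 and fix q with 2 ≤ q ≤ n. Let f : ℝ → ℝ be f(x) = (−1)^q · x^{n−q} · ln x for x > 0. Then the (n−1)-st derivative of f is strictly positive at every x with 0 < x < 1; indeed f^{(n−1)}(x) = (n−q)!·(q−2)!·x^{1−q} for all x > 0. -/
noncomputable def stmt16AB (m : ℕ) : ℕ → ℝ × ℝ
  | 0 => (1, 0)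
  | (k+1) => (((m : ℝ) - k) * (stmt16AB m k).1,
      (stmt16AB m k).1 + ((m : ℝ) - k) * (stmt16AB m k).2)

lemma stmt16_hasDerivAt (A B : ℝ) (e : ℤ) (x : ℝ) (hx : 0 < x) :
    HasDerivAt (fun y : ℝ => A * y ^ e * Real.log y + B * y ^ e)
      ((A * e) * x ^ (e - 1) * Real.log x + (A + B * e) * x ^ (e - 1)) x := by
  have h1 : HasDerivAt (fun y : ℝ => y ^ e) ((e : ℝ) * x ^ (e - 1)) x :=
    hasDerivAt_zpow e x (Or.inl hx.ne')
  have h2 : HasDerivAt Real.log x⁻¹ x := Real.hasDerivAt_log hx.ne'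
  have h := ((h1.const_mul A).mul h2).add (h1.const_mul B)
  refine h.congr_deriv ?_
  have hxe : x ^ (e - 1) = x ^ e * x⁻¹ := by
    rw [zpow_sub_one₀ hx.ne']
  rw [hxe]; ring

lemma stmt16_main (c : ℝ) (m : ℕ) (k : ℕ) : ∀ x ∈ Set.Ioi (0 : ℝ),
    iteratedDerivWithin k (fun y : ℝ => c * y ^ m * Real.log y) (Set.Ioi 0) x
      = c * (stmt16AB m k).1 * x ^ ((m : ℤ) - k) * Real.log x
        + c * (stmt16AB m k).2 * x ^ ((m : ℤ) - k) := by
  induction k with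
  | zero =>
    intro x hx
    simp [stmt16AB, zpow_natCast]
  | succ k ih =>
    intro x hx
    have hx0 : (0 : ℝ) < x := hx
    rw [iteratedDerivWithin_succ]
    rw [derivWithin_congr ih (ih x hx)]
    rw [derivWithin_of_isOpen isOpen_Ioi hx]
    rw [(stmt16_hasDerivAt (c * (stmt16AB m k).1) (c * (stmt16AB m k).2)
      ((m : ℤ) - k) x hx0).deriv]
    have he : ((m : ℤ) - k : ℤ) - 1 = (m : ℤ) - (k + 1 : ℕ) := by push_cast; ring
    rw [he]
    simp only [stmt16AB]
    push_cast
    ring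

lemma stmt16_A_desc (m : ℕ) : ∀ k : ℕ, k ≤ m → (stmt16AB m k).1 = (m.descFactorial k : ℝ) := by
  intro k
  induction k with
  | zero => intro _; simp [stmt16AB]
  | succ k ih =>
    intro hk
    have hk' : k ≤ m := Nat.le_of_succ_le hk
    simp only [stmt16AB, ih hk', Nat.descFactorial_succ]
    rw [Nat.cast_mul, Nat.cast_sub hk']

lemma stmt16_A_zero (m : ℕ) : ∀ k : ℕ, m < k → (stmt16AB m k).1 = 0 := by
  intro k
  induction k with
  | zero => omega
  | succ k ih =>
    intro hk
    rcases Nat.lt_succ_iff_lt_or_eq.mp hk with h | h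
    · simp [stmt16AB, ih h]
    · subst h; simp [stmt16AB]

lemma stmt16_B_val (m : ℕ) : ∀ j : ℕ,
    (stmt16AB m (m + 1 + j)).2 = (m.factorial : ℝ) * (-1) ^ j * (j.factorial : ℝ) := by
  intro j
  induction j with
  | zero =>
    simp only [Nat.add_zero, stmt16AB, stmt16_A_desc m m le_rfl, Nat.descFactorial_self]
    simp
  | succ j ih =>
    have h1 : (stmt16AB m (m + 1 + j)).1 = 0 := stmt16_A_zero m _ (by omega)
    have : m + 1 + (j + 1) = (m + 1 + j) + 1 := by ring
    rw [this]
    simp only [stmt16AB, h1, ih]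
    have hfac : ((j + 1).factorial : ℝ) = (j + 1) * j.factorial := by
      rw [Nat.factorial_succ]; push_cast; ring
    rw [hfac]
    push_cast
    ring

/-- For `f(x) = (−1)^q x^{n−q} ln x`, the `(n−1)`-st derivative of `f` on the domain
`x > 0` is `(n−q)!·(q−2)!·x^{1−q}`, which is strictly positive for `0 < x < 1`
(indeed for all `x > 0`). -/
theorem stmt_16 (n : ℕ) (hn : 2 ≤ n) (q : ℕ) (hq2 : 2 ≤ q) (hqn : q ≤ n)
    (f : ℝ → ℝ) (hf : ∀ x : ℝ, f x = (-1 : ℝ) ^ q * x ^ (n - q) * Real.log x) :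
    (∀ x : ℝ, 0 < x → x < 1 → 0 < iteratedDerivWithin (n - 1) f (Set.Ioi 0) x)
    ∧ ∀ x : ℝ, 0 < x → iteratedDerivWithin (n - 1) f (Set.Ioi 0) x
        = ((n - q).factorial : ℝ) * ((q - 2).factorial : ℝ) * x ^ (1 - (q : ℤ)) := by
  have hfe : f = fun y : ℝ => (-1 : ℝ) ^ q * y ^ (n - q) * Real.log y := funext hf
  set m := n - q with hm
  have hsplit : n - 1 = m + 1 + (q - 2) := by omega
  have key : ∀ x : ℝ, 0 < x → iteratedDerivWithin (n - 1) f (Set.Ioi 0) x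
      = ((n - q).factorial : ℝ) * ((q - 2).factorial : ℝ) * x ^ (1 - (q : ℤ)) := by
    intro x hx
    rw [hfe]
    rw [stmt16_main ((-1 : ℝ) ^ q) m (n - 1) x hx]
    have hA : (stmt16AB m (n - 1)).1 = 0 := stmt16_A_zero m _ (by omega)
    have hB : (stmt16AB m (n - 1)).2
        = (m.factorial : ℝ) * (-1) ^ (q - 2) * ((q - 2).factorial : ℝ) := by
      rw [hsplit]; exact stmt16_B_val m (q - 2)
    have hE : (m : ℤ) - (n - 1 : ℕ) = 1 - (q : ℤ) := by
      have h1 : ((m : ℕ) : ℤ) = (n : ℤ) - q := by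
        rw [hm, Nat.cast_sub hqn]
      have h2 : ((n - 1 : ℕ) : ℤ) = (n : ℤ) - 1 := by
        rw [Nat.cast_sub (by omega)]; simp
      rw [h1, h2]; ring
    rw [hA, hB, hE]
    have hsign : (-1 : ℝ) ^ q * ((m.factorial : ℝ) * (-1) ^ (q - 2) * ((q - 2).factorial : ℝ))
        = (m.factorial : ℝ) * ((q - 2).factorial : ℝ) := by
      have hq : q = (q - 2) + 2 := by omega
      have hone : (-1 : ℝ) ^ q * (-1) ^ (q - 2) = 1 := by
        conv_lhs => rw [hq]
        rw [← pow_add]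
        exact Even.neg_one_pow ⟨q - 1, by omega⟩
      calc (-1 : ℝ) ^ q * ((m.factorial : ℝ) * (-1) ^ (q - 2) * ((q - 2).factorial : ℝ))
          = ((-1 : ℝ) ^ q * (-1) ^ (q - 2)) * ((m.factorial : ℝ) * ((q - 2).factorial : ℝ)) := by
            ring
        _ = (m.factorial : ℝ) * ((q - 2).factorial : ℝ) := by rw [hone]; ring
    rw [mul_zero, zero_mul, zero_mul, zero_add, hsign]
  refine ⟨fun x hx _ => ?_, key⟩
  rw [key x hx]
  positivity
end
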